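/- arXiv:1011.0284 — 2 statements merged into one kernel-verified Lean document; each statement's English description precedes it below -/
import Mathlib

section
/- Let G be a connected finite simple graph. If the matching polynomial μ(G,x) has exactly 2 distinct real roots, then G is isomorphic to the complete graph K₂. -/
open Polynomial

/-- The graph obtained from `G` by deleting the vertex `u` and all incident edges. -/
def SimpleGraph.deleteVertex {V : Type*} (G : SimpleGraph V) (u : V) :
    SimpleGraph {v : V // v ≠ u} where
  Adj a b := G.Adj a b
  symm := ⟨fun _ _ h => G.symm.symm _ _ h⟩
  loopless := ⟨fun a h => G.loopless.irrefl a h⟩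

/-- `s` is a matching in `G`: a set of edges of `G` that are pairwise non-incident. -/
def SimpleGraph.IsMatchingFinset {V : Type*} (G : SimpleGraph V) (s : Finset (Sym2 V)) : Prop :=
  ↑s ⊆ G.edgeSet ∧ (s : Set (Sym2 V)).Pairwise fun e f => ∀ v ∈ e, v ∉ f

/-- `m(G,k)`: the number of `k`-matchings in `G`. -/
noncomputable def SimpleGraph.numMatchings {V : Type*} (G : SimpleGraph V) (k : ℕ) : ℕ :=
  {s : Finset (Sym2 V) | s.card = k ∧ G.IsMatchingFinset s}.ncard

/-- The matching polynomial `μ(G,x) = ∑_k (-1)^k m(G,k) x^(n-2k)`. -/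
noncomputable def SimpleGraph.matchingPolynomial {V : Type*} [Fintype V] (G : SimpleGraph V) :
    Polynomial ℝ :=
  ∑ k ∈ Finset.range (Fintype.card V + 1),
    C ((-1 : ℝ) ^ k * (G.numMatchings k : ℝ)) * X ^ (Fintype.card V - 2 * k)

namespace HLproof
set_option linter.unusedSectionVars false

open Finset

variable {V : Type*} [Fintype V] [DecidableEq V] (G : SimpleGraph V) [DecidableRel G.Adj]

/-- endpoints of a `Sym2` as a finset -/
def ends (e : Sym2 V) : Finset V := Finset.univ.filter (· ∈ e)

lemma mem_ends {e : Sym2 V} {x : V} : x ∈ ends e ↔ x ∈ e := by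
  simp [ends]

lemma card_ends {e : Sym2 V} (h : ¬ e.IsDiag) : (ends e).card = 2 := by
  induction e with
  | _ a b =>
    have hab : a ≠ b := by simpa using h
    have : ends s(a,b) = {a, b} := by
      ext x; simp [mem_ends, Sym2.mem_iff]
    rw [this, Finset.card_insert_of_notMem (by simpa using hab), Finset.card_singleton]

/-- vertices covered by a set of edges -/
def cov (s : Finset (Sym2 V)) : Finset V := s.biUnion ends

lemma mem_cov {s : Finset (Sym2 V)} {x : V} : x ∈ cov s ↔ ∃ e ∈ s, x ∈ e := by
  simp [cov, mem_ends]

lemma card_cov {s : Finset (Sym2 V)} (hs : G.IsMatchingFinset s) :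
    (cov s).card = 2 * s.card := by
  rw [cov, Finset.card_biUnion]
  · rw [Finset.sum_congr rfl (fun e he => card_ends (G.not_isDiag_of_mem_edgeSet (hs.1 he)))]
    simp [Finset.sum_const, mul_comm]
  · intro e he f hf hef
    simp only [Finset.disjoint_left, mem_ends]
    intro x hxe hxf
    exact hs.2 he hf hef x hxe hxf

/-- matchings with covered vertices inside `A`, as a finset -/
noncomputable def MF (A : Finset V) (k : ℕ) : Finset (Finset (Sym2 V)) :=
  (Set.toFinite {s : Finset (Sym2 V) | s.card = k ∧ G.IsMatchingFinset s ∧ cov s ⊆ A}).toFinset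

lemma mem_MF {A : Finset V} {k : ℕ} {s : Finset (Sym2 V)} :
    s ∈ MF G A k ↔ s.card = k ∧ G.IsMatchingFinset s ∧ cov s ⊆ A := by
  simp [MF]

/-- relative matching numbers -/
noncomputable def mm (A : Finset V) (k : ℕ) : ℕ := (MF G A k).card

lemma numMatchings_eq (k : ℕ) : G.numMatchings k = mm G Finset.univ k := by
  classical
  rw [SimpleGraph.numMatchings, mm, Set.ncard_eq_toFinset_card']
  congr 1
  ext s
  simp [mem_MF]

lemma matching_empty : G.IsMatchingFinset ∅ := by
  constructor
  · simp
  · simp [Set.Pairwise]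

lemma mm_zero (A : Finset V) : mm G A 0 = 1 := by
  have : MF G A 0 = {∅} := by
    ext s
    simp only [mem_MF, Finset.mem_singleton, Finset.card_eq_zero]
    constructor
    · rintro ⟨rfl, -, -⟩; rfl
    · rintro rfl
      exact ⟨rfl, matching_empty G, by simp [cov]⟩
  rw [mm, this, Finset.card_singleton]

lemma mm_eq_zero {A : Finset V} {k : ℕ} (h : A.card < 2 * k) : mm G A k = 0 := by
  rw [mm, Finset.card_eq_zero]
  ext s
  simp only [mem_MF, Finset.notMem_empty, iff_false, not_and]
  rintro rfl hm hsub
  have h1 : (cov s).card ≤ A.card := Finset.card_le_card hsub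
  rw [card_cov G hm] at h1
  omega

lemma numMatchings_eq_zero {k : ℕ} (h : Fintype.card V < 2 * k) : G.numMatchings k = 0 := by
  rw [numMatchings_eq]
  exact mm_eq_zero G (by simpa using h)

lemma sum_range_peel {n : ℕ} (hn : 1 ≤ n) (f : ℕ → ℂ) (h : f (n-1) = 0) :
    ∑ k ∈ Finset.range n, f k = ∑ k ∈ Finset.range (n-1), f k := by
  conv_lhs => rw [show n = n - 1 + 1 from by omega]
  rw [Finset.sum_range_succ, h, add_zero]

lemma matchRel_symm : Symmetric (fun e f : Sym2 V => ∀ v ∈ e, v ∉ f) := by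
  intro e f h w hwf hwe
  exact h w hwe hwf

lemma mm_rec {A : Finset V} {u : V} (hu : u ∈ A) (k : ℕ) :
    mm G A (k+1) = mm G (A.erase u) (k+1)
      + ∑ v ∈ (A.erase u).filter (fun v => G.Adj u v), mm G ((A.erase u).erase v) k := by
  classical
  set A' := A.erase u with hA'
  set N := A'.filter (fun v => G.Adj u v) with hN
  set S := MF G A (k+1) with hS
  have h0 : S.filter (fun s => u ∉ cov s) = MF G A' (k+1) := by
    ext s
    simp only [hS, Finset.mem_filter, mem_MF, hA', Finset.subset_erase]
    tauto
  have h1 : S.filter (fun s => u ∈ cov s)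
      = N.biUnion (fun v => S.filter (fun s => s(u,v) ∈ s)) := by
    ext s
    simp only [Finset.mem_filter, Finset.mem_biUnion, hN, hA', Finset.mem_erase]
    constructor
    · rintro ⟨hs, hcov⟩
      rw [mem_cov] at hcov
      obtain ⟨e, hes, hue⟩ := hcov
      obtain ⟨v, rfl⟩ := Sym2.mem_iff_exists.mp hue
      have hadj : G.Adj u v := (SimpleGraph.mem_edgeSet G).mp (((mem_MF G).mp hs).2.1.1 hes)
      refine ⟨v, ⟨⟨⟨hadj.ne', ((mem_MF G).mp hs).2.2 (mem_cov.mpr ⟨_, hes, Sym2.mem_mk_right u v⟩)⟩, hadj⟩, hs, hes⟩⟩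
    · rintro ⟨v, -, hs, hes⟩
      exact ⟨hs, mem_cov.mpr ⟨_, hes, Sym2.mem_mk_left u v⟩⟩
  have hdisj : ∀ v ∈ N, ∀ v' ∈ N, v ≠ v' →
      Disjoint (S.filter (fun s => s(u,v) ∈ s)) (S.filter (fun s => s(u,v') ∈ s)) := by
    intro v hv v' hv' hne
    rw [Finset.disjoint_left]
    intro s hs hs'
    obtain ⟨hsS, he⟩ := Finset.mem_filter.mp hs
    obtain ⟨-, he'⟩ := Finset.mem_filter.mp hs'
    have hmm := ((mem_MF G).mp hsS).2.1
    have hedne : s(u,v) ≠ s(u,v') := fun hc => hne (Sym2.congr_right.mp hc)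
    exact hmm.2 he he' hedne u (Sym2.mem_mk_left u v) (Sym2.mem_mk_left u v')
  have hcards : ∀ v ∈ N, (S.filter (fun s => s(u,v) ∈ s)).card = mm G (A'.erase v) k := by
    intro v hv
    obtain ⟨hvA', hadj⟩ := Finset.mem_filter.mp hv
    have hvA : v ∈ A := (Finset.mem_erase.mp hvA').2
    refine Finset.card_bij' (fun s _ => s.erase s(u,v)) (fun t _ => insert s(u,v) t) ?_ ?_ ?_ ?_
    · -- forward maps into target
      intro s hs
      obtain ⟨hsS, hes⟩ := Finset.mem_filter.mp hs
      obtain ⟨hcard, hm, hcov⟩ := (mem_MF G).mp hsS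
      rw [mem_MF]
      refine ⟨by rw [Finset.card_erase_of_mem hes, hcard]; omega, ⟨?_, ?_⟩, ?_⟩
      · exact fun e he => hm.1 (Finset.erase_subset _ _ he)
      · exact hm.2.mono (by exact_mod_cast Finset.coe_subset.mpr (Finset.erase_subset _ _))
      · intro w hw
        rw [mem_cov] at hw
        obtain ⟨f, hf, hwf⟩ := hw
        obtain ⟨hfne, hfs⟩ := Finset.mem_erase.mp hf
        have hwA : w ∈ A := hcov (mem_cov.mpr ⟨f, hfs, hwf⟩)
        have hwu : w ≠ u := by
          intro hh
          exact hm.2 hfs hes hfne w hwf (by rw [hh]; exact Sym2.mem_mk_left u v)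
        have hwv : w ≠ v := by
          intro hh
          exact hm.2 hfs hes hfne w hwf (by rw [hh]; exact Sym2.mem_mk_right u v)
        exact Finset.mem_erase.mpr ⟨hwv, Finset.mem_erase.mpr ⟨hwu, hwA⟩⟩
    · -- backward maps into source
      intro t ht
      obtain ⟨hcard, hm, hcov⟩ := (mem_MF G).mp ht
      have hucov : u ∉ cov t := fun hc => by
        have := hcov hc
        rw [Finset.mem_erase, Finset.mem_erase] at this
        exact this.2.1 rfl
      have hvcov : v ∉ cov t := fun hc => by
        have := hcov hc
        rw [Finset.mem_erase] at this
        exact this.1 rfl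
      have hnot : s(u,v) ∉ t := fun hc => hucov (mem_cov.mpr ⟨_, hc, Sym2.mem_mk_left u v⟩)
      rw [Finset.mem_filter]
      constructor
      · rw [mem_MF]
        refine ⟨by rw [Finset.card_insert_of_notMem hnot, hcard], ⟨?_, ?_⟩, ?_⟩
        · intro e he
          rcases Finset.mem_insert.mp he with rfl | he'
          · exact (SimpleGraph.mem_edgeSet G).mpr hadj
          · exact hm.1 he'
        · rw [Finset.coe_insert]
          haveI : Std.Symm (fun e f : Sym2 V => ∀ v ∈ e, v ∉ f) := ⟨fun a b h => matchRel_symm h⟩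
          refine (Set.pairwise_insert_of_symm).mpr ⟨hm.2, ?_⟩
          intro f hft hne w hwe hwf
          rcases Sym2.mem_iff.mp hwe with h' | h'
          · exact hucov (mem_cov.mpr ⟨f, hft, h' ▸ hwf⟩)
          · exact hvcov (mem_cov.mpr ⟨f, hft, h' ▸ hwf⟩)
        · intro w hw
          rw [mem_cov] at hw
          obtain ⟨f, hf, hwf⟩ := hw
          rcases Finset.mem_insert.mp hf with rfl | hft
          · rcases Sym2.mem_iff.mp hwf with rfl | rfl
            · exact hu
            · exact hvA
          · have := hcov (mem_cov.mpr ⟨f, hft, hwf⟩)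
            rw [Finset.mem_erase] at this
            exact (Finset.mem_erase.mp this.2).2
      · exact Finset.mem_insert_self _ _
    · intro s hs
      exact Finset.insert_erase (Finset.mem_filter.mp hs).2
    · intro t ht
      obtain ⟨-, hm, hcov⟩ := (mem_MF G).mp ht
      have hucov : u ∉ cov t := fun hc => by
        have := hcov hc
        rw [Finset.mem_erase, Finset.mem_erase] at this
        exact this.2.1 rfl
      have hnot : s(u,v) ∉ t := fun hc => hucov (mem_cov.mpr ⟨_, hc, Sym2.mem_mk_left u v⟩)
      exact Finset.erase_insert hnot
  have hsum : (S.filter (fun s => u ∈ cov s)).card = ∑ v ∈ N, mm G (A'.erase v) k := by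
    rw [h1, Finset.card_biUnion hdisj]
    exact Finset.sum_congr rfl hcards
  have htot : (S.filter (fun s => u ∈ cov s)).card + (S.filter (fun s => u ∉ cov s)).card
      = S.card :=
    Finset.card_filter_add_card_filter_not (p := fun s => u ∈ cov s)
  have hfin : mm G A (k+1) = S.card := by rw [mm, hS]
  rw [hfin, ← htot, h0, hsum, add_comm]
  rfl

/-- the matching "polynomial" relative to `A`, evaluated at a complex number -/
noncomputable def F (A : Finset V) (z : ℂ) : ℂ :=
  ∑ k ∈ Finset.range (A.card + 1), (-1 : ℂ)^k * (mm G A k : ℂ) * z ^ (A.card - 2*k)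

lemma F_empty (z : ℂ) : F G ∅ z = 1 := by
  simp [F, mm_zero]

lemma F_rec {A : Finset V} {u : V} (hu : u ∈ A) (z : ℂ) :
    F G A z = z * F G (A.erase u) z
      - ∑ v ∈ (A.erase u).filter (fun v => G.Adj u v), F G ((A.erase u).erase v) z := by
  classical
  have hn1 : 1 ≤ A.card := Finset.card_pos.mpr ⟨u, hu⟩
  have hA'c : (A.erase u).card = A.card - 1 := Finset.card_erase_of_mem hu
  have hmm0 : mm G (A.erase u) A.card = 0 := mm_eq_zero G (by rw [hA'c]; omega)
  have key : F G A z
      = z^A.card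
        + ∑ k ∈ Finset.range A.card,
            (-1:ℂ)^(k+1) * (mm G (A.erase u) (k+1) : ℂ) * z^(A.card-2*(k+1))
        + ∑ k ∈ Finset.range A.card, (-1:ℂ)^(k+1) *
            (∑ v ∈ (A.erase u).filter (fun v => G.Adj u v),
              (mm G ((A.erase u).erase v) k : ℂ)) * z^(A.card-2*(k+1)) := by
    rw [F, Finset.sum_range_succ']
    have hterm : ∀ k ∈ Finset.range A.card,
        (-1:ℂ)^(k+1) * (mm G A (k+1) : ℂ) * z^(A.card-2*(k+1))
        = (-1:ℂ)^(k+1) * (mm G (A.erase u) (k+1) : ℂ) * z^(A.card-2*(k+1))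
          + (-1:ℂ)^(k+1) * (∑ v ∈ (A.erase u).filter (fun v => G.Adj u v),
              (mm G ((A.erase u).erase v) k : ℂ)) * z^(A.card-2*(k+1)) := by
      intro k hk
      rw [mm_rec G hu k]
      push_cast
      ring
    rw [Finset.sum_congr rfl hterm, Finset.sum_add_distrib]
    simp only [mm_zero, pow_zero, Nat.cast_one, mul_zero, Nat.sub_zero, mul_one, one_mul]
    ring
  have ha : z * F G (A.erase u) z
      = z^A.card + ∑ k ∈ Finset.range A.card,
          (-1:ℂ)^(k+1) * (mm G (A.erase u) (k+1) : ℂ) * z^(A.card-2*(k+1)) := by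
    have hpeel : ∑ k ∈ Finset.range A.card,
        (-1:ℂ)^(k+1) * (mm G (A.erase u) (k+1) : ℂ) * z^(A.card-2*(k+1))
        = ∑ k ∈ Finset.range (A.card - 1),
            (-1:ℂ)^(k+1) * (mm G (A.erase u) (k+1) : ℂ) * z^(A.card-2*(k+1)) :=
      sum_range_peel hn1 _ (by
        rw [show A.card - 1 + 1 = A.card from by omega, hmm0]
        simp)
    have hterm : ∀ k ∈ Finset.range (A.card - 1),
        z * ((-1:ℂ)^(k+1) * (mm G (A.erase u) (k+1) : ℂ) * z^(A.card-1-2*(k+1)))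
        = (-1:ℂ)^(k+1) * (mm G (A.erase u) (k+1) : ℂ) * z^(A.card-2*(k+1)) := by
      intro k hk
      by_cases hm : mm G (A.erase u) (k+1) = 0
      · simp [hm]
      · have h2 : 2*(k+1) ≤ A.card - 1 := by
          by_contra hcon
          exact hm (mm_eq_zero G (by rw [hA'c]; omega))
        rw [show A.card - 2*(k+1) = (A.card - 1 - 2*(k+1)) + 1 from by omega, pow_succ]
        ring
    rw [hpeel, F, hA'c, Finset.sum_range_succ', mul_add, Finset.mul_sum]
    simp only [mm_zero, pow_zero, Nat.cast_one, Nat.sub_zero, mul_one, one_mul]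
    rw [Finset.sum_congr rfl hterm]
    rw [show z * z^(A.card - 1 - 2*0) = z^A.card from by rw [← pow_succ']; congr 1; omega]
    ring
  have hb : ∑ v ∈ (A.erase u).filter (fun v => G.Adj u v), F G ((A.erase u).erase v) z
      = - ∑ k ∈ Finset.range A.card, (-1:ℂ)^(k+1) *
          (∑ v ∈ (A.erase u).filter (fun v => G.Adj u v),
            (mm G ((A.erase u).erase v) k : ℂ)) * z^(A.card-2*(k+1)) := by
    have h1 : ∀ k ∈ Finset.range A.card, (-1:ℂ)^(k+1) *
        (∑ v ∈ (A.erase u).filter (fun v => G.Adj u v),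
          (mm G ((A.erase u).erase v) k : ℂ)) * z^(A.card-2*(k+1))
        = ∑ v ∈ (A.erase u).filter (fun v => G.Adj u v),
            (-1:ℂ)^(k+1) * (mm G ((A.erase u).erase v) k : ℂ) * z^(A.card-2*(k+1)) := by
      intro k _
      rw [Finset.mul_sum, Finset.sum_mul]
    rw [Finset.sum_congr rfl h1, Finset.sum_comm, ← Finset.sum_neg_distrib]
    refine Finset.sum_congr rfl ?_
    intro v hv
    obtain ⟨hvA', hadj⟩ := Finset.mem_filter.mp hv
    have hn2 : 2 ≤ A.card := by
      have hsub : ({u, v} : Finset V) ⊆ A := by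
        intro x hx
        rcases Finset.mem_insert.mp hx with rfl | hx'
        · exact hu
        · rw [Finset.mem_singleton] at hx'
          subst hx'
          exact (Finset.mem_erase.mp hvA').2
      calc 2 = ({u, v} : Finset V).card := by
              rw [Finset.card_insert_of_notMem (by
                simp only [Finset.mem_singleton]
                exact fun hc => (Finset.mem_erase.mp hvA').1 hc.symm), Finset.card_singleton]
        _ ≤ A.card := Finset.card_le_card hsub
    have hvc : ((A.erase u).erase v).card = A.card - 2 := by
      rw [Finset.card_erase_of_mem hvA', hA'c]
      omega
    have hmmv : mm G ((A.erase u).erase v) (A.card - 1) = 0 :=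
      mm_eq_zero G (by rw [hvc]; omega)
    have hpeel : ∑ k ∈ Finset.range A.card,
        (-1:ℂ)^(k+1) * (mm G ((A.erase u).erase v) k : ℂ) * z^(A.card-2*(k+1))
        = ∑ k ∈ Finset.range (A.card - 1),
            (-1:ℂ)^(k+1) * (mm G ((A.erase u).erase v) k : ℂ) * z^(A.card-2*(k+1)) :=
      sum_range_peel hn1 _ (by rw [hmmv]; simp)
    rw [hpeel, F, hvc, show A.card - 2 + 1 = A.card - 1 from by omega,
      ← Finset.sum_neg_distrib]
    refine Finset.sum_congr rfl ?_
    intro k hk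
    rw [show A.card - 2*(k+1) = A.card - 2 - 2*k from by omega]
    ring
  rw [key, ha, hb]
  ring

/-- Heilmann–Lieb: key induction -/
lemma F_im_pos : ∀ (A : Finset V) (z : ℂ), 0 < z.im →
    F G A z ≠ 0 ∧ ∀ u ∈ A, 0 < (F G A z / F G (A.erase u) z).im := by
  intro A
  induction A using Finset.strongInduction with
  | _ A ih =>
    intro z hz
    have hrat : ∀ u ∈ A, 0 < (F G A z / F G (A.erase u) z).im := by
      intro u hu
      have ihA' := ih (A.erase u) (Finset.erase_ssubset hu) z hz
      have hFA' : F G (A.erase u) z ≠ 0 := ihA'.1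
      have hsum : ∀ v ∈ (A.erase u).filter (fun v => G.Adj u v),
          (F G ((A.erase u).erase v) z / F G (A.erase u) z).im < 0 := by
        intro v hv
        have hvA' : v ∈ A.erase u := (Finset.mem_filter.mp hv).1
        have h2 := ihA'.2 v hvA'
        have hwne : F G (A.erase u) z / F G ((A.erase u).erase v) z ≠ 0 := by
          intro h0
          rw [h0] at h2
          simp at h2
        have hflip : F G ((A.erase u).erase v) z / F G (A.erase u) z
            = (F G (A.erase u) z / F G ((A.erase u).erase v) z)⁻¹ := by
          rw [inv_div]
        rw [hflip, Complex.inv_im]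
        apply div_neg_of_neg_of_pos
        · linarith
        · exact Complex.normSq_pos.mpr hwne
      have hrw : F G A z / F G (A.erase u) z
          = z - ∑ v ∈ (A.erase u).filter (fun v => G.Adj u v),
              F G ((A.erase u).erase v) z / F G (A.erase u) z := by
        rw [F_rec G hu z, sub_div, mul_div_assoc, div_self hFA', mul_one, Finset.sum_div]
      rw [hrw, Complex.sub_im]
      have him : (∑ v ∈ (A.erase u).filter (fun v => G.Adj u v),
          F G ((A.erase u).erase v) z / F G (A.erase u) z).im
          = ∑ v ∈ (A.erase u).filter (fun v => G.Adj u v),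
            (F G ((A.erase u).erase v) z / F G (A.erase u) z).im := by
        exact Complex.im_sum _ _
      rw [him]
      have hle : ∑ v ∈ (A.erase u).filter (fun v => G.Adj u v),
          (F G ((A.erase u).erase v) z / F G (A.erase u) z).im ≤ 0 :=
        Finset.sum_nonpos (fun v hv => le_of_lt (hsum v hv))
      linarith
    refine ⟨?_, hrat⟩
    rcases Finset.eq_empty_or_nonempty A with rfl | ⟨u, hu⟩
    · rw [F_empty]
      exact one_ne_zero
    · have h := hrat u hu
      intro h0
      rw [h0, zero_div] at h
      simp at h

lemma F_conj (A : Finset V) (z : ℂ) : F G A (starRingEnd ℂ z) = starRingEnd ℂ (F G A z) := by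
  simp [F, map_sum, map_mul, map_pow]

lemma F_ne_zero {A : Finset V} {z : ℂ} (hz : z.im ≠ 0) : F G A z ≠ 0 := by
  rcases lt_or_gt_of_ne hz with h | h
  · have := (F_im_pos G A (starRingEnd ℂ z) (by simpa using by linarith : (0:ℝ) < (starRingEnd ℂ z).im)).1
    intro h0
    exact this (by rw [F_conj, h0, map_zero])
  · exact (F_im_pos G A z h).1

lemma eval_map_eq_F (z : ℂ) :
    ((G.matchingPolynomial).map (algebraMap ℝ ℂ)).eval z = F G Finset.univ z := by
  rw [SimpleGraph.matchingPolynomial, Polynomial.map_sum, Polynomial.eval_finset_sum, F,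
    Finset.card_univ]
  refine Finset.sum_congr rfl ?_
  intro k _
  rw [Polynomial.map_mul, Polynomial.map_pow, Polynomial.map_C, Polynomial.map_X,
    Polynomial.eval_mul, Polynomial.eval_pow, Polynomial.eval_C, Polynomial.eval_X,
    numMatchings_eq G k, Complex.coe_algebraMap]
  push_cast
  ring

/-- every complex root of the matching polynomial is real -/
lemma im_eq_zero_of_root {z : ℂ} (hz : ((G.matchingPolynomial).map (algebraMap ℝ ℂ)).eval z = 0) :
    z.im = 0 := by
  by_contra h
  exact F_ne_zero G h (by rw [← eval_map_eq_F]; exact hz)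

lemma numMatchings_zero : G.numMatchings 0 = 1 := by
  rw [numMatchings_eq, mm_zero]

lemma coeff_mp (d : ℕ) :
    (G.matchingPolynomial).coeff d
      = ∑ k ∈ Finset.range (Fintype.card V + 1),
          if d = Fintype.card V - 2*k then (-1:ℝ)^k * (G.numMatchings k : ℝ) else 0 := by
  rw [SimpleGraph.matchingPolynomial, Polynomial.finset_sum_coeff]
  refine Finset.sum_congr rfl ?_
  intro k _
  rw [Polynomial.coeff_C_mul, Polynomial.coeff_X_pow]
  split_ifs <;> simp

lemma coeff_top (hn : 1 ≤ Fintype.card V) :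
    (G.matchingPolynomial).coeff (Fintype.card V) = 1 := by
  rw [coeff_mp]
  rw [Finset.sum_eq_single 0]
  · rw [if_pos (by omega)]
    simp [numMatchings_zero]
  · intro k hk hkne
    rw [if_neg (by omega)]
  · intro hc
    simp at hc

lemma natDegree_le : (G.matchingPolynomial).natDegree ≤ Fintype.card V := by
  rw [Polynomial.natDegree_le_iff_coeff_eq_zero]
  intro d hd
  rw [coeff_mp]
  refine Finset.sum_eq_zero ?_
  intro k _
  rw [if_neg (by omega)]

lemma monic_mp (hn : 1 ≤ Fintype.card V) : (G.matchingPolynomial).Monic := by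
  have hdeg : (G.matchingPolynomial).natDegree = Fintype.card V :=
    le_antisymm (natDegree_le G)
      (Polynomial.le_natDegree_of_ne_zero (by rw [coeff_top G hn]; exact one_ne_zero))
  rw [Polynomial.Monic, Polynomial.leadingCoeff, hdeg, coeff_top G hn]

lemma natDegree_mp (hn : 1 ≤ Fintype.card V) :
    (G.matchingPolynomial).natDegree = Fintype.card V :=
  le_antisymm (natDegree_le G)
    (Polynomial.le_natDegree_of_ne_zero (by rw [coeff_top G hn]; exact one_ne_zero))

lemma eval_neg_mp (x : ℝ) :
    (G.matchingPolynomial).eval (-x)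
      = (-1)^(Fintype.card V) * (G.matchingPolynomial).eval x := by
  rw [SimpleGraph.matchingPolynomial, Polynomial.eval_finset_sum, Polynomial.eval_finset_sum,
    Finset.mul_sum]
  refine Finset.sum_congr rfl ?_
  intro k hk
  rw [Polynomial.eval_mul, Polynomial.eval_C, Polynomial.eval_pow, Polynomial.eval_X,
    Polynomial.eval_mul, Polynomial.eval_C, Polynomial.eval_pow, Polynomial.eval_X]
  by_cases hm : G.numMatchings k = 0
  · simp [hm]
  · have h2 : 2*k ≤ Fintype.card V := by
      by_contra hcon
      exact hm (numMatchings_eq_zero G (by omega))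
    have hpar : (-1:ℝ)^(Fintype.card V - 2*k) = (-1)^(Fintype.card V) := by
      calc (-1:ℝ)^(Fintype.card V - 2*k)
          = (-1)^(Fintype.card V - 2*k) * ((-1:ℝ)^2)^k := by norm_num
        _ = (-1)^((Fintype.card V - 2*k) + 2*k) := by rw [← pow_mul, ← pow_add]
        _ = (-1)^(Fintype.card V) := by rw [show (Fintype.card V - 2*k) + 2*k = Fintype.card V from by omega]
    rw [neg_pow x, hpar]
    ring

lemma roots_card (hn : 1 ≤ Fintype.card V) :
    (G.matchingPolynomial).roots.card = Fintype.card V := by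
  set p := G.matchingPolynomial with hpdef
  have hp0 : p ≠ 0 := (monic_mp G hn).ne_zero
  obtain ⟨g, hg⟩ := Polynomial.prod_multiset_X_sub_C_dvd p
  have hprodmonic : ((p.roots.map fun a => X - C a).prod).Monic :=
    Polynomial.monic_multiset_prod_of_monic _ _ (fun a _ => Polynomial.monic_X_sub_C a)
  have hg0 : g ≠ 0 := by
    rintro rfl
    rw [mul_zero] at hg
    exact hp0 hg
  have hgroots : g.roots = 0 := by
    have hmul := Polynomial.roots_mul (hg ▸ hp0)
    rw [Polynomial.roots_multiset_prod_X_sub_C] at hmul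
    have : p.roots = p.roots + g.roots := by rw [← hmul, ← hg]
    have h2 := congrArg Multiset.card this
    rw [Multiset.card_add] at h2
    have : Multiset.card g.roots = 0 := by omega
    exact Multiset.card_eq_zero.mp this
  have hgdeg : g.natDegree = 0 := by
    by_contra hne
    have hdegpos : 0 < (g.map (algebraMap ℝ ℂ)).degree := by
      rw [Polynomial.degree_map_eq_of_injective (algebraMap ℝ ℂ).injective]
      rcases (Polynomial.natDegree_pos_iff_degree_pos (p := g)).mp (Nat.pos_of_ne_zero hne) with h
      exact h
    obtain ⟨z, hz⟩ := Complex.exists_root hdegpos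
    have hzroot : ((p.map (algebraMap ℝ ℂ))).eval z = 0 := by
      rw [hg, Polynomial.map_mul, Polynomial.eval_mul, hz, mul_zero]
    have him : z.im = 0 := im_eq_zero_of_root G hzroot
    have hzre : z = ((z.re : ℝ) : ℂ) := by
      apply Complex.ext <;> simp [him]
    have hx : g.eval z.re = 0 := by
      have h' : Polynomial.eval z (Polynomial.map (algebraMap ℝ ℂ) g) = 0 := hz
      rw [hzre, Polynomial.eval_map,
        show ((z.re : ℝ) : ℂ) = algebraMap ℝ ℂ z.re from rfl,
        Polynomial.eval₂_at_apply] at h'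
      rw [Complex.coe_algebraMap] at h'
      exact_mod_cast h'
    have : z.re ∈ g.roots := by
      rw [Polynomial.mem_roots hg0]
      exact hx
    rw [hgroots] at this
    simp at this
  have hdegs : p.natDegree = Multiset.card p.roots + g.natDegree := by
    conv_lhs => rw [hg]
    rw [Polynomial.natDegree_mul hprodmonic.ne_zero hg0,
      Polynomial.natDegree_multiset_prod_X_sub_C_eq_card]
  rw [natDegree_mp G hn] at hdegs
  omega

lemma sym2_eq_of_mem_iff {e f : Sym2 V} (he : ¬ e.IsDiag) (h : ∀ w, w ∈ e ↔ w ∈ f) :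
    e = f := by
  induction e with
  | _ a b =>
    have hab : a ≠ b := by simpa using he
    have ha : a ∈ f := (h a).mp (Sym2.mem_mk_left a b)
    have hb : b ∈ f := (h b).mp (Sym2.mem_mk_right a b)
    exact ((Sym2.mem_and_mem_iff hab).mp ⟨ha, hb⟩).symm

lemma numMatchings_one : G.numMatchings 1 = G.edgeFinset.card := by
  classical
  have himg : {s : Finset (Sym2 V) | s.card = 1 ∧ G.IsMatchingFinset s}
      = (fun e => ({e} : Finset (Sym2 V))) '' G.edgeSet := by
    ext s
    simp only [Set.mem_setOf_eq, Set.mem_image, Finset.card_eq_one]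
    constructor
    · rintro ⟨⟨e, rfl⟩, hm⟩
      exact ⟨e, hm.1 (by simp), rfl⟩
    · rintro ⟨e, he, rfl⟩
      refine ⟨⟨e, rfl⟩, ?_, ?_⟩
      · intro f hf
        simp only [Finset.coe_singleton, Set.mem_singleton_iff] at hf
        subst hf
        exact he
      · intro f hf g hg hfg
        simp only [Finset.coe_singleton, Set.mem_singleton_iff] at hf hg
        subst hf; subst hg
        exact absurd rfl hfg
  rw [SimpleGraph.numMatchings, himg,
    Set.ncard_image_of_injective _ (fun a b hab => by simpa using hab)]
  rw [SimpleGraph.edgeFinset]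
  exact Set.ncard_eq_toFinset_card' _

lemma card_edgeFinset_ge (hG : G.Connected) :
    Fintype.card V - 1 ≤ G.edgeFinset.card := by
  classical
  rcases isEmpty_or_nonempty V with hV | hV
  · simp [Fintype.card_eq_zero]
  obtain ⟨v₀⟩ := hV
  have hex : ∀ v : V, ∃ x : V, v ≠ v₀ → G.Adj v x ∧ G.dist x v₀ < G.dist v v₀ := by
    intro v
    by_cases hv : v = v₀
    · exact ⟨v₀, fun hc => absurd hv hc⟩
    · have hd : 0 < G.dist v v₀ := hG.pos_dist_of_ne hv
      obtain ⟨p, hp⟩ := hG.exists_walk_length_eq_dist v v₀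
      cases p with
      | nil => exact absurd rfl hv
      | @cons _ x _ h q =>
        refine ⟨x, fun _ => ⟨h, ?_⟩⟩
        have hq : G.dist x v₀ ≤ q.length := SimpleGraph.dist_le q
        simp only [SimpleGraph.Walk.length_cons] at hp
        omega
  choose f hf using hex
  have hinj : Set.InjOn (fun v => s(v, f v)) (Finset.univ.erase v₀ : Finset V) := by
    intro v hv w hw hvw
    simp only [Finset.coe_erase, Set.mem_diff, Finset.coe_univ] at hv hw
    have hv' : v ≠ v₀ := by
      intro hc; exact (by simpa [hc] using hv)
    have hw' : w ≠ v₀ := by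
      intro hc; exact (by simpa [hc] using hw)
    by_contra hne
    rcases Sym2.eq_iff.mp hvw with ⟨h1, h2⟩ | ⟨h1, h2⟩
    · exact hne h1
    · have hlt1 := (hf v hv').2
      have hlt2 := (hf w hw').2
      rw [h2] at hlt1
      rw [← h1] at hlt2
      omega
  have hmaps : ∀ v ∈ (Finset.univ.erase v₀ : Finset V), s(v, f v) ∈ G.edgeFinset := by
    intro v hv
    have hv' : v ≠ v₀ := (Finset.mem_erase.mp hv).1
    rw [SimpleGraph.mem_edgeFinset, SimpleGraph.mem_edgeSet]
    exact (hf v hv').1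
  have := Finset.card_le_card_of_injOn _ hmaps hinj
  rw [Finset.card_erase_of_mem (Finset.mem_univ v₀), Finset.card_univ] at this
  exact this

lemma pm_card_le {m : ℕ} (hm : 1 ≤ m) (hV : Fintype.card V = 2*m) :
    m * G.numMatchings m ≤ G.numMatchings (m-1) := by
  classical
  have hnum : ∀ k, G.numMatchings k
      = (Finset.univ.filter (fun s : Finset (Sym2 V) => s.card = k ∧ G.IsMatchingFinset s)).card := by
    intro k
    rw [SimpleGraph.numMatchings, Set.ncard_eq_toFinset_card']
    congr 1
    ext s
    simp
  set Mk : ℕ → Finset (Finset (Sym2 V)) :=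
    fun k => Finset.univ.filter (fun s : Finset (Sym2 V) => s.card = k ∧ G.IsMatchingFinset s)
    with hMk
  have hmem : ∀ {k} {s : Finset (Sym2 V)}, s ∈ Mk k ↔ s.card = k ∧ G.IsMatchingFinset s := by
    intro k s
    simp [hMk]
  -- the perfect matchings cover everything
  have hcovuniv : ∀ s ∈ Mk m, cov s = Finset.univ := by
    intro s hs
    obtain ⟨hcard, hmatch⟩ := hmem.mp hs
    apply Finset.eq_univ_of_card
    rw [card_cov G hmatch, hcard, hV]
  -- membership in the removed edge is determined
  have hkey : ∀ s ∈ Mk m, ∀ e ∈ s, ∀ w : V, w ∈ e ↔ w ∉ cov (s.erase e) := by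
    intro s hs e he w
    obtain ⟨hcard, hmatch⟩ := hmem.mp hs
    constructor
    · intro hwe hwcov
      rw [mem_cov] at hwcov
      obtain ⟨f, hf, hwf⟩ := hwcov
      obtain ⟨hfne, hfs⟩ := Finset.mem_erase.mp hf
      exact hmatch.2 he hfs (fun hc => hfne hc.symm) w hwe hwf
    · intro hwcov
      have hwuniv : w ∈ cov s := by rw [hcovuniv s hs]; exact Finset.mem_univ w
      rw [mem_cov] at hwuniv
      obtain ⟨f, hf, hwf⟩ := hwuniv
      by_cases hfe : f = e
      · subst hfe; exact hwf
      · exact absurd (mem_cov.mpr ⟨f, Finset.mem_erase.mpr ⟨hfe, hf⟩, hwf⟩) hwcov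
  have hcount : m * G.numMatchings m = ((Mk m).sigma (fun s => s)).card := by
    rw [Finset.card_sigma, hnum]
    rw [Finset.sum_congr rfl (fun s hs => (hmem.mp hs).1)]
    rw [Finset.sum_const, smul_eq_mul, mul_comm]
  rw [hcount, hnum]
  apply Finset.card_le_card_of_injOn (fun p => p.1.erase p.2)
  · rintro ⟨s, e⟩ hp
    rw [Finset.mem_coe, Finset.mem_sigma] at hp
    obtain ⟨hs, he⟩ := hp
    obtain ⟨hcard, hmatch⟩ := hmem.mp hs
    rw [Finset.mem_coe, Finset.mem_filter]
    refine ⟨Finset.mem_univ _, by rw [Finset.card_erase_of_mem he, hcard], ?_, ?_⟩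
    · exact fun f hf => hmatch.1 (Finset.erase_subset _ _ hf)
    · exact hmatch.2.mono (by exact_mod_cast Finset.coe_subset.mpr (Finset.erase_subset _ _))
  · rintro ⟨s, e⟩ hp ⟨s', e'⟩ hp' heq
    simp only [Finset.coe_sigma, Set.mem_sigma_iff, Finset.mem_coe] at hp hp'
    obtain ⟨hs, he⟩ := hp
    obtain ⟨hs', he'⟩ := hp'
    simp only at heq
    have hnd : ¬ e.IsDiag :=
      G.not_isDiag_of_mem_edgeSet ((hmem.mp hs).2.1 he)
    have hee' : e = e' := by
      apply sym2_eq_of_mem_iff hnd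
      intro w
      rw [hkey s hs e he w, hkey s' hs' e' he' w, heq]
    have hss' : s = s' := by
      rw [← Finset.insert_erase he, ← Finset.insert_erase he', heq, hee']
    subst hss'
    subst hee'
    rfl

end HLproof

open HLproof in
/-- A connected graph whose matching polynomial has exactly two distinct (real) roots is `K₂`. -/
theorem isoK2_of_two_distinct_matching_roots {V : Type*} [Fintype V]
    (G : SimpleGraph V) (hG : G.Connected)
    (h : G.matchingPolynomial.roots.toFinset.card = 2) :
    Nonempty (G ≃g (⊤ : SimpleGraph (Fin 2))) := by
  classical
  have hn0 : Fintype.card V ≠ 0 := by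
    intro h0
    have hp1 : G.matchingPolynomial = Polynomial.C 1 := by
      rw [SimpleGraph.matchingPolynomial, h0]
      simp [numMatchings_zero]
    rw [hp1] at h
    simp at h
  have hn1 : 1 ≤ Fintype.card V := Nat.one_le_iff_ne_zero.mpr hn0
  have hmono := monic_mp G hn1
  have hp0 : G.matchingPolynomial ≠ 0 := hmono.ne_zero
  have hsym : ∀ r : ℝ, r ∈ G.matchingPolynomial.roots → -r ∈ G.matchingPolynomial.roots := by
    intro r hr
    rw [Polynomial.mem_roots hp0] at hr ⊢
    have heq := eval_neg_mp G r
    rw [Polynomial.IsRoot.def] at hr ⊢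
    rw [heq, hr, mul_zero]
  obtain ⟨a, b, hab, hT⟩ := Finset.card_eq_two.mp h
  have hmemT : ∀ r : ℝ, r ∈ G.matchingPolynomial.roots.toFinset ↔ r = a ∨ r = b := by
    intro r; rw [hT]; simp
  have hTneg : ∀ r : ℝ, r ∈ G.matchingPolynomial.roots.toFinset →
      -r ∈ G.matchingPolynomial.roots.toFinset := by
    intro r hr
    rw [Multiset.mem_toFinset] at hr ⊢
    exact hsym r hr
  have haT : a ∈ G.matchingPolynomial.roots.toFinset := by rw [hmemT]; left; rfl
  have hbT : b ∈ G.matchingPolynomial.roots.toFinset := by rw [hmemT]; right; rfl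
  have ha0 : a ≠ 0 := by
    rintro rfl
    rcases (hmemT (-b)).mp (hTneg b hbT) with h1 | h1
    · exact hab (show (0:ℝ) = b by linarith)
    · exact hab (show (0:ℝ) = b by linarith)
  have hb0 : b ≠ 0 := by
    rintro rfl
    rcases (hmemT (-a)).mp (hTneg a haT) with h1 | h1
    · exact hab (show a = (0:ℝ) by linarith)
    · exact hab (show a = (0:ℝ) by linarith)
  have hba : b = -a := by
    rcases (hmemT (-a)).mp (hTneg a haT) with h1 | h1
    · exact absurd (by linarith : a = 0) ha0
    · exact h1.symm
  have hpar : Fintype.card V % 2 = 0 := by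
    rcases Nat.mod_two_eq_zero_or_one (Fintype.card V) with h2 | h2
    · exact h2
    · exfalso
      have hodd : Odd (Fintype.card V) := Nat.odd_iff.mpr h2
      have heval := eval_neg_mp G 0
      rw [neg_zero, hodd.neg_one_pow] at heval
      have h00 : G.matchingPolynomial.eval 0 = 0 := by linarith
      have h0T : (0:ℝ) ∈ G.matchingPolynomial.roots.toFinset := by
        rw [Multiset.mem_toFinset, Polynomial.mem_roots hp0]
        exact h00
      rcases (hmemT 0).mp h0T with h1 | h1
      · exact ha0 h1.symm
      · exact hb0 h1.symm
  obtain ⟨m, hm⟩ : ∃ m, Fintype.card V = 2*m := ⟨Fintype.card V / 2, by omega⟩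
  have hm1 : 1 ≤ m := by omega
  have hrc := roots_card G hn1
  have hsplits : (G.matchingPolynomial).Splits := by
    rw [Polynomial.splits_iff_card_roots, hrc, natDegree_mp G hn1]
  set ca := G.matchingPolynomial.roots.count a with hcadef
  set cb := G.matchingPolynomial.roots.count (-a) with hcbdef
  have hTa : G.matchingPolynomial.roots.toFinset = {a, -a} := by rw [hT, hba]
  have hane : a ≠ -a := by intro hc; apply ha0; linarith
  have hroots : G.matchingPolynomial.roots = ca • ({a} : Multiset ℝ) + cb • {(-a)} := by
    have hh := Multiset.toFinset_sum_count_nsmul_eq G.matchingPolynomial.roots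
    rw [hTa, Finset.sum_pair hane] at hh
    exact hh.symm
  have hcacb : ca + cb = Fintype.card V := by
    have hcc := congrArg Multiset.card hroots
    rw [hrc] at hcc
    simp [Multiset.card_add, Multiset.card_nsmul] at hcc
    omega
  have hnext : G.matchingPolynomial.nextCoeff = 0 := by
    rw [Polynomial.nextCoeff, natDegree_mp G hn1, if_neg hn0, coeff_mp]
    refine Finset.sum_eq_zero ?_
    intro k _
    rw [if_neg (by omega)]
  have hsum0 : G.matchingPolynomial.roots.sum = 0 := by
    have hss := hsplits.nextCoeff_eq_neg_sum_roots_of_monic hmono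
    rw [hnext] at hss
    linarith [hss]
  have hcaeq : ca = cb := by
    rw [hroots, Multiset.sum_add, Multiset.nsmul_singleton, Multiset.nsmul_singleton,
      Multiset.sum_replicate, Multiset.sum_replicate, nsmul_eq_mul, nsmul_eq_mul] at hsum0
    have h5 : ((ca:ℝ) - cb) * a = 0 := by linear_combination hsum0
    rcases mul_eq_zero.mp h5 with h6 | h6
    · have : (ca:ℝ) = cb := by linarith
      exact_mod_cast this
    · exact absurd h6 ha0
  have hcam : ca = m := by omega
  have hcbm : cb = m := by omega
  have hfact : G.matchingPolynomial = ((X - Polynomial.C a) * (X + Polynomial.C a))^m := by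
    have hPP := hsplits.eq_prod_roots_of_monic hmono
    rw [hroots, Multiset.map_add, Multiset.prod_add, Multiset.nsmul_singleton,
      Multiset.nsmul_singleton, Multiset.map_replicate, Multiset.map_replicate,
      Multiset.prod_replicate, Multiset.prod_replicate, hcam, hcbm] at hPP
    rw [hPP, mul_pow]
    congr 2
    rw [map_neg, sub_neg_eq_add]
  have hsq : G.matchingPolynomial = (X^2 - Polynomial.C (a^2))^m := by
    rw [hfact]
    congr 1
    have hre : (X - Polynomial.C a) * (X + Polynomial.C a)
        = X^2 - Polynomial.C a * Polynomial.C a := by ring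
    rw [hre, ← Polynomial.C_mul, ← sq]
  have hcoeffq : ∀ d : ℕ, ((X^2 - Polynomial.C (a^2))^m : Polynomial ℝ).coeff d
      = ∑ j ∈ Finset.range (m+1),
          if d = 2*j then ((-(a^2))^(m-j) * (m.choose j : ℝ)) else 0 := by
    intro d
    rw [sub_eq_add_neg, add_pow, Polynomial.finset_sum_coeff]
    refine Finset.sum_congr rfl ?_
    intro j _
    have hterm : ((X^2 : Polynomial ℝ))^j * (-Polynomial.C (a^2))^(m-j) * (m.choose j : Polynomial ℝ)
        = Polynomial.C ((-(a^2))^(m-j) * (m.choose j : ℝ)) * X^(2*j) := by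
      rw [← Polynomial.C_neg, ← map_pow, ← pow_mul,
        show ((m.choose j : ℕ) : Polynomial ℝ) = Polynomial.C ((m.choose j : ℕ) : ℝ) from
          (Polynomial.C_eq_natCast _).symm, Polynomial.C_mul]
      ring
    rw [hterm, Polynomial.coeff_C_mul, Polynomial.coeff_X_pow]
    split_ifs <;> simp
  -- m_m = (a²)^m
  have hc0 : ((G.numMatchings m : ℝ)) = (a^2)^m := by
    have h1 : G.matchingPolynomial.coeff 0 = (-1:ℝ)^m * G.numMatchings m := by
      rw [coeff_mp]
      rw [Finset.sum_eq_single m]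
      · rw [if_pos (by omega)]
      · intro k hk hkne
        by_cases hcond : (0:ℕ) = Fintype.card V - 2*k
        · rw [if_pos hcond, numMatchings_eq_zero G (by omega)]
          simp
        · rw [if_neg hcond]
      · intro hc; exfalso; apply hc; rw [Finset.mem_range]; omega
    have h2 : G.matchingPolynomial.coeff 0 = (-(a^2))^m := by
      rw [hsq, hcoeffq]
      rw [Finset.sum_eq_single 0]
      · rw [if_pos (by omega)]; simp
      · intro j hj hjne; rw [if_neg (by omega)]
      · intro hc; simp at hc
    rw [h1, show (-(a^2):ℝ)^m = (-1)^m * (a^2)^m from by rw [neg_pow]] at h2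
    exact mul_left_cancel₀ (pow_ne_zero _ (by norm_num)) h2
  by_cases hm2 : 2 ≤ m
  · exfalso
    -- m_{m-1} = (a²)^(m-1) * m
    have hc2 : ((G.numMatchings (m-1) : ℝ)) = (a^2)^(m-1) * m := by
      have h1 : G.matchingPolynomial.coeff 2 = (-1:ℝ)^(m-1) * G.numMatchings (m-1) := by
        rw [coeff_mp]
        rw [Finset.sum_eq_single (m-1)]
        · rw [if_pos (by omega)]
        · intro k hk hkne
          rw [if_neg (by omega)]
        · intro hc; exfalso; apply hc; rw [Finset.mem_range]; omega
      have h2 : G.matchingPolynomial.coeff 2 = (-(a^2))^(m-1) * m := by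
        rw [hsq, hcoeffq]
        rw [Finset.sum_eq_single 1]
        · rw [if_pos (by omega), Nat.choose_one_right]
        · intro j hj hjne; rw [if_neg (by omega)]
        · intro hc; exfalso; apply hc; rw [Finset.mem_range]; omega
      have h4 : (-1:ℝ)^(m-1) * ((G.numMatchings (m-1) : ℝ))
          = (-1:ℝ)^(m-1) * ((a^2)^(m-1) * (m:ℝ)) := by
        rw [← h1, h2, neg_pow]
        ring
      exact mul_left_cancel₀ (pow_ne_zero _ (show (-1:ℝ) ≠ 0 by norm_num)) h4
    -- m_1 = a² * m
    have hc1 : ((G.numMatchings 1 : ℝ)) = a^2 * m := by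
      have h1 : G.matchingPolynomial.coeff (2*m-2) = (-1:ℝ) * G.numMatchings 1 := by
        rw [coeff_mp]
        rw [Finset.sum_eq_single 1]
        · rw [if_pos (by omega)]
          norm_num
        · intro k hk hkne
          rw [if_neg (by omega)]
        · intro hc; exfalso; apply hc; rw [Finset.mem_range]; omega
      have h2 : G.matchingPolynomial.coeff (2*m-2) = -(a^2) * m := by
        rw [hsq, hcoeffq]
        rw [Finset.sum_eq_single (m-1)]
        · rw [if_pos (by omega)]
          rw [show m - (m-1) = 1 from by omega, pow_one,
            Nat.choose_symm (show 1 ≤ m by omega), Nat.choose_one_right]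
        · intro j hj hjne; rw [if_neg (by omega)]
        · intro hc; exfalso; apply hc; rw [Finset.mem_range]; omega
      rw [h1] at h2
      nlinarith [h2]
    have hineq := pm_card_le G hm1 hm
    have hcpos : (0:ℝ) < a^2 := by positivity
    have hppos : (0:ℝ) < (a^2)^(m-1) := by positivity
    have hcast : ((m * G.numMatchings m : ℕ) : ℝ) ≤ ((G.numMatchings (m-1) : ℕ) : ℝ) :=
      Nat.cast_le.mpr hineq
    push_cast at hcast
    rw [hc0, hc2] at hcast
    have hpow : (a^2:ℝ)^m = (a^2)^(m-1) * a^2 := by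
      rw [← pow_succ]
      congr 1
      omega
    have hmR : (0:ℝ) < (m:ℝ) := by
      have : 0 < m := by omega
      exact_mod_cast this
    have hc_le_one : (a^2:ℝ) ≤ 1 := by
      rw [hpow] at hcast
      nlinarith [hppos, hcpos, mul_pos hmR hppos]
    -- edges
    have hedge := card_edgeFinset_ge G hG
    rw [← numMatchings_one G] at hedge
    have hm1le : ((G.numMatchings 1 : ℕ):ℝ) ≤ m := by
      rw [hc1]
      nlinarith [hc_le_one, hmR, hcpos]
    have hm1le' : G.numMatchings 1 ≤ m := by exact_mod_cast hm1le
    omega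
  · -- m = 1, card V = 2
    have hcard2 : Fintype.card V = 2 := by omega
    have hadj2 : ∀ x y : V, x ≠ y → G.Adj x y := by
      intro x y hxy
      obtain ⟨w⟩ := hG.preconnected x y
      cases w with
      | nil => exact absurd rfl hxy
      | @cons _ z _ hxz q =>
        by_cases hzy : z = y
        · subst hzy; exact hxz
        · exfalso
          have h3 : ({x, z, y} : Finset V).card = 3 := by
            rw [Finset.card_insert_of_notMem (by simp [hxz.ne, hxy]),
              Finset.card_insert_of_notMem (by simp [hzy]), Finset.card_singleton]
          have hle := Finset.card_le_card (Finset.subset_univ ({x, z, y} : Finset V))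
          rw [h3, Finset.card_univ, hcard2] at hle
          omega
    let e : V ≃ Fin 2 := Fintype.equivFinOfCardEq hcard2
    refine ⟨⟨e, @fun x y => ?_⟩⟩
    simp only [SimpleGraph.top_adj, ne_eq, EmbeddingLike.apply_eq_iff_eq]
    constructor
    · intro hne
      exact hadj2 x y hne
    · intro hadj
      exact hadj.ne
end

section
/- Let G be a connected finite simple graph. If the matching polynomial μ(G,x) has exactly 3 distinct real roots, then G is isomorphic either to a star K_{1,m} for some m ≥ 2, or to the triangle K₃. -/
open Polynomial

/-- The star `K_{1,m}` with centre `none` and `m` leaves. -/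
def starGraph (m : ℕ) : SimpleGraph (Option (Fin m)) :=
  SimpleGraph.fromRel fun x _ => x = none

set_option linter.unusedSectionVars false

namespace MatchProof

variable {V : Type*} [Fintype V] [DecidableEq V]

/-- matching condition inside a vertex set `S` -/
def isM (G : SimpleGraph V) (S : Finset V) (s : Finset (Sym2 V)) : Prop :=
  (↑s ⊆ G.edgeSet) ∧ (∀ e ∈ s, ∀ v ∈ e, v ∈ S) ∧
    (s : Set (Sym2 V)).Pairwise fun e f => ∀ v ∈ e, v ∉ f

open scoped Classical in
noncomputable def mf (G : SimpleGraph V) (S : Finset V) (k : ℕ) : Finset (Finset (Sym2 V)) :=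
  Finset.univ.filter (fun s => s.card = k ∧ isM G S s)

noncomputable def mm (G : SimpleGraph V) (S : Finset V) (k : ℕ) : ℕ := (mf G S k).card

open scoped Classical in
lemma mem_mf {G : SimpleGraph V} {S : Finset V} {k : ℕ} {s : Finset (Sym2 V)} :
    s ∈ mf G S k ↔ s.card = k ∧ isM G S s := by
  simp [mf]

lemma mm_zero (G : SimpleGraph V) (S : Finset V) : mm G S 0 = 1 := by
  classical
  have : mf G S 0 = {∅} := by
    ext s
    simp only [mem_mf, Finset.card_eq_zero, Finset.mem_singleton]
    constructor
    · rintro ⟨rfl, -⟩; rfl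
    · rintro rfl
      refine ⟨rfl, ?_, ?_, ?_⟩ <;> simp [Set.Pairwise]
  rw [mm, this, Finset.card_singleton]

lemma edge_filter_eq {G : SimpleGraph V} {S : Finset V} {s : Finset (Sym2 V)}
    (hs : isM G S s) {e : Sym2 V} (he : e ∈ s) :
    ∃ a b : V, a ≠ b ∧ e = s(a,b) ∧ a ∈ S ∧ b ∈ S ∧ G.Adj a b ∧
      S.filter (· ∈ e) = {a, b} := by
  obtain ⟨a, b, rfl⟩ : ∃ a b, e = s(a,b) := by
    induction e using Sym2.inductionOn with
    | _ a b => exact ⟨a, b, rfl⟩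
  have hadj : G.Adj a b := (G.mem_edgeSet).1 (hs.1 he)
  have hab : a ≠ b := hadj.ne
  have ha : a ∈ S := hs.2.1 _ he a (by simp)
  have hb : b ∈ S := hs.2.1 _ he b (by simp)
  refine ⟨a, b, hab, rfl, ha, hb, hadj, ?_⟩
  ext x
  simp only [Finset.mem_filter, Sym2.mem_iff, Finset.mem_insert, Finset.mem_singleton]
  constructor
  · rintro ⟨-, h | h⟩ <;> tauto
  · rintro (rfl | rfl) <;> tauto

lemma two_mul_card_le {G : SimpleGraph V} {S : Finset V} {s : Finset (Sym2 V)}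
    (hs : isM G S s) : 2 * s.card ≤ S.card := by
  classical
  have hdisj : ∀ x ∈ s, ∀ y ∈ s, x ≠ y →
      Disjoint (S.filter (· ∈ x)) (S.filter (· ∈ y)) := by
    intro x hx y hy hne
    rw [Finset.disjoint_left]
    intro v hv hv'
    exact (hs.2.2 hx hy hne v (Finset.mem_filter.1 hv).2) (Finset.mem_filter.1 hv').2
  have hcard : (s.biUnion (fun e => S.filter (· ∈ e))).card = 2 * s.card := by
    rw [Finset.card_biUnion hdisj]
    rw [Finset.sum_congr rfl (fun e he => ?_), Finset.sum_const, smul_eq_mul, mul_comm]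
    obtain ⟨a, b, hab, -, -, -, -, hfil⟩ := edge_filter_eq hs he
    rw [hfil, Finset.card_insert_of_notMem (by simp [hab]), Finset.card_singleton]
  calc 2 * s.card = (s.biUnion (fun e => S.filter (· ∈ e))).card := hcard.symm
    _ ≤ S.card := Finset.card_le_card (Finset.biUnion_subset.2 fun e _ => Finset.filter_subset _ _)

lemma mm_eq_zero {G : SimpleGraph V} {S : Finset V} {k : ℕ} (h : S.card < 2 * k) :
    mm G S k = 0 := by
  classical
  rw [mm, Finset.card_eq_zero]
  ext s
  simp only [mem_mf, Finset.notMem_empty, iff_false, not_and]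
  rintro rfl hs
  exact absurd (two_mul_card_le hs) (by omega)

lemma numMatchings_eq (G : SimpleGraph V) (k : ℕ) :
    G.numMatchings k = mm G Finset.univ k := by
  classical
  rw [SimpleGraph.numMatchings, mm]
  rw [show {s : Finset (Sym2 V) | s.card = k ∧ G.IsMatchingFinset s} = ↑(mf G Finset.univ k) by
    ext s
    simp only [Set.mem_setOf_eq, Finset.coe_mem, Finset.mem_coe, mem_mf]
    unfold SimpleGraph.IsMatchingFinset isM
    exact ⟨fun h => ⟨h.1, ⟨h.2.1, fun e _ v _ => Finset.mem_univ v, h.2.2⟩⟩,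
      fun h => ⟨h.1, h.2.1, h.2.2.2⟩⟩]
  exact Set.ncard_coe_finset _

/-- the matching polynomial relative to a vertex subset -/
noncomputable def mu (G : SimpleGraph V) (S : Finset V) : ℝ[X] :=
  ∑ k ∈ Finset.range (S.card + 1), C ((-1:ℝ)^k * (mm G S k : ℝ)) * X ^ (S.card - 2*k)

lemma matchingPolynomial_eq (G : SimpleGraph V) :
    G.matchingPolynomial = mu G Finset.univ := by
  rw [SimpleGraph.matchingPolynomial, mu, Finset.card_univ]
  exact Finset.sum_congr rfl fun k _ => by rw [numMatchings_eq]

lemma mu_empty (G : SimpleGraph V) : mu G (∅ : Finset V) = 1 := by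
  simp [mu, mm_zero]

lemma mu_coeff {G : SimpleGraph V} {S : Finset V} {j : ℕ} (hj : 2*j ≤ S.card) :
    (mu G S).coeff (S.card - 2*j) = (-1:ℝ)^j * mm G S j := by
  rw [mu, finset_sum_coeff]
  rw [Finset.sum_eq_single j]
  · rw [Polynomial.coeff_C_mul, Polynomial.coeff_X_pow, if_pos rfl, mul_one]
  · intro k hk hkj
    simp only [coeff_C_mul, coeff_X_pow]
    rcases le_or_gt (2*k) S.card with h2 | h2
    · have : ¬ (S.card - 2*j = S.card - 2*k) := by omega
      simp [this]
    · rw [mm_eq_zero h2]; simp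
  · intro h
    exact absurd (Finset.mem_range.2 (by omega)) h

lemma mu_natDegree_le (G : SimpleGraph V) (S : Finset V) : (mu G S).natDegree ≤ S.card := by
  refine (Polynomial.natDegree_sum_le _ _).trans ?_
  simp only [Finset.fold_max_le]
  refine ⟨Nat.zero_le _, fun k _ => ?_⟩
  exact (Polynomial.natDegree_C_mul_X_pow_le _ _).trans (by omega)

lemma mu_monic (G : SimpleGraph V) (S : Finset V) : (mu G S).Monic := by
  refine Polynomial.monic_of_natDegree_le_of_coeff_eq_one S.card (mu_natDegree_le G S) ?_
  have := mu_coeff (G := G) (S := S) (j := 0) (by omega)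
  simpa [mm_zero] using this

lemma mu_ne_zero (G : SimpleGraph V) (S : Finset V) : mu G S ≠ 0 := (mu_monic G S).ne_zero

lemma mu_natDegree (G : SimpleGraph V) (S : Finset V) : (mu G S).natDegree = S.card := by
  refine le_antisymm (mu_natDegree_le G S) (Polynomial.le_natDegree_of_ne_zero ?_)
  have := mu_coeff (G := G) (S := S) (j := 0) (by omega)
  simp only [Nat.mul_zero, Nat.sub_zero] at this
  rw [this]
  simp [mm_zero]



lemma symm_rel : Symmetric (fun (e f : Sym2 V) => ∀ v ∈ e, v ∉ f) :=
  fun _ _ h w hwf hwe => (h w hwe) hwf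

open scoped Classical in
noncomputable def nbr (G : SimpleGraph V) (S : Finset V) (u : V) : Finset V :=
  (S.erase u).filter (fun v => G.Adj u v)

open scoped Classical in
lemma mem_nbr {G : SimpleGraph V} {S : Finset V} {u v : V} :
    v ∈ nbr G S u ↔ v ∈ S ∧ v ≠ u ∧ G.Adj u v := by
  simp only [nbr, Finset.mem_filter, Finset.mem_erase]; tauto

lemma mm_rec (G : SimpleGraph V) {S : Finset V} {u : V} (hu : u ∈ S) (k : ℕ) :
    mm G S (k+1) = mm G (S.erase u) (k+1) +
      ∑ v ∈ nbr G S u, mm G ((S.erase u).erase v) k := by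
  classical
  have hsplit : mf G (S.erase u) (k+1) = (mf G S (k+1)).filter (fun s => ∀ e ∈ s, u ∉ e) := by
    ext s
    simp only [mem_mf, Finset.mem_filter, isM]
    constructor
    · rintro ⟨hcard, h1, h2, h3⟩
      refine ⟨⟨hcard, h1, fun e he v hv => Finset.mem_of_mem_erase (h2 e he v hv), h3⟩,
        fun e he hue => ?_⟩
      exact (Finset.ne_of_mem_erase (h2 e he u hue)) rfl
    · rintro ⟨⟨hcard, h1, h2, h3⟩, h4⟩
      exact ⟨hcard, h1, fun e he v hv => Finset.mem_erase.2
        ⟨fun hvu => h4 e he (hvu ▸ hv), h2 e he v hv⟩, h3⟩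
  have hcov : (mf G S (k+1)).filter (fun s => ¬ ∀ e ∈ s, u ∉ e) =
      (nbr G S u).biUnion (fun v =>
        (mf G ((S.erase u).erase v) k).image (insert s(u,v))) := by
    ext s
    simp only [Finset.mem_filter, Finset.mem_biUnion, Finset.mem_image, mem_mf]
    constructor
    · rintro ⟨⟨hcard, h1, h2, h3⟩, h4⟩
      push_neg at h4
      obtain ⟨e, he, hue⟩ := h4
      have hnd : ¬ e.IsDiag := G.not_isDiag_of_mem_edgeSet (h1 he)
      set v := Sym2.Mem.other hue with hv
      have hspec : s(u, v) = e := Sym2.other_spec hue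
      have hvu : v ≠ u := Sym2.other_ne hnd hue
      have hvmem : v ∈ e := by rw [← hspec]; simp
      have hadj : G.Adj u v := by
        rw [← SimpleGraph.mem_edgeSet, hspec]; exact h1 he
      refine ⟨v, mem_nbr.2 ⟨h2 e he v hvmem, hvu, hadj⟩, s.erase e, ⟨?_, ?_, ?_, ?_⟩, ?_⟩
      · rw [Finset.card_erase_of_mem he, hcard]; rfl
      · exact fun f hf => h1 (Finset.mem_of_mem_erase hf)
      · intro f hf w hw
        have hfs : f ∈ s := Finset.mem_of_mem_erase hf
        have hfe : f ≠ e := Finset.ne_of_mem_erase hf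
        have hwu : w ≠ u := fun hweq => h3 he hfs (Ne.symm hfe) u hue (hweq ▸ hw)
        have hwv : w ≠ v := fun hweq => h3 he hfs (Ne.symm hfe) v hvmem (hweq ▸ hw)
        exact Finset.mem_erase.2 ⟨hwv, Finset.mem_erase.2 ⟨hwu, h2 f hfs w hw⟩⟩
      · exact h3.mono (by simp [Finset.erase_subset])
      · rw [hspec, Finset.insert_erase he]
    · rintro ⟨v, hv, s', ⟨hcard, h1, h2, h3⟩, rfl⟩
      obtain ⟨hvS, hvu, hadj⟩ := mem_nbr.1 hv
      have hnotmem : ∀ f ∈ s', ∀ w ∈ f, w ≠ u ∧ w ≠ v := by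
        intro f hf w hw
        have := h2 f hf w hw
        simp only [Finset.mem_erase] at this
        exact ⟨this.2.1, this.1⟩
      have huv_not : s(u,v) ∉ s' := fun hmem =>
        (hnotmem _ hmem u (by simp)).1 rfl
      have hins : ∀ f ∈ s', f ≠ s(u,v) := fun f hf heq => huv_not (heq ▸ hf)
      refine ⟨⟨?_, ?_, ?_, ?_⟩, ?_⟩
      · rw [Finset.card_insert_of_notMem huv_not, hcard]
      · intro f hf
        rcases Finset.mem_insert.1 hf with rfl | hf'
        · exact (SimpleGraph.mem_edgeSet G).2 hadj
        · exact h1 hf'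
      · intro f hf w hw
        rcases Finset.mem_insert.1 hf with rfl | hf'
        · rcases Sym2.mem_iff.1 hw with rfl | rfl
          · exact hu
          · exact hvS
        · exact Finset.mem_of_mem_erase (Finset.mem_of_mem_erase (h2 f hf' w hw))
      · rw [Finset.coe_insert]
        refine (haveI : Std.Symm (fun (e f : Sym2 V) => ∀ v ∈ e, v ∉ f) := ⟨fun _ _ h => symm_rel h⟩; Set.pairwise_insert_of_symm).2 ⟨h3, ?_⟩
        intro f hf _ w hw
        rcases Sym2.mem_iff.1 hw with rfl | rfl
        · exact fun hwf => (hnotmem f hf _ hwf).1 rfl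
        · exact fun hwf => (hnotmem f hf _ hwf).2 rfl
      · push_neg
        exact ⟨s(u,v), Finset.mem_insert_self _ _, by simp⟩
  have hdisj : ∀ v₁ ∈ nbr G S u, ∀ v₂ ∈ nbr G S u, v₁ ≠ v₂ →
      Disjoint ((mf G ((S.erase u).erase v₁) k).image (insert s(u,v₁)))
               ((mf G ((S.erase u).erase v₂) k).image (insert s(u,v₂))) := by
    intro v₁ h₁ v₂ h₂ hne
    rw [Finset.disjoint_left]
    rintro s hs₁ hs₂
    obtain ⟨t₁, ht₁, rfl⟩ := Finset.mem_image.1 hs₁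
    obtain ⟨t₂, ht₂, heq⟩ := Finset.mem_image.1 hs₂
    have hmem : s(u,v₂) ∈ insert s(u,v₁) t₁ := by
      rw [← heq]; exact Finset.mem_insert_self _ _
    rcases Finset.mem_insert.1 hmem with heq2 | hmem2
    · have : (v₂ : V) ∈ s(u,v₁) := by rw [← heq2]; simp
      rcases Sym2.mem_iff.1 this with rfl | rfl
      · exact (mem_nbr.1 h₂).2.1 rfl
      · exact hne rfl
    · have := (mem_mf.1 ht₁).2.2.1 _ hmem2 u (by simp)
      simp only [Finset.mem_erase] at this
      exact this.2.1 rfl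
  have hinj : ∀ v ∈ nbr G S u, Set.InjOn (insert s(u,v)) ↑((mf G ((S.erase u).erase v) k : Finset (Finset (Sym2 V))) : Set (Finset (Sym2 V))) := by
    intro v hv t₁ ht₁ t₂ ht₂ heq
    have hnot : ∀ t ∈ mf G ((S.erase u).erase v) k, s(u,v) ∉ t := by
      intro t ht hmem
      have := (mem_mf.1 ht).2.2.1 _ hmem u (by simp)
      simp only [Finset.mem_erase] at this
      exact this.2.1 rfl
    rw [← Finset.erase_insert (hnot t₁ (by simpa using ht₁)), heq,
      Finset.erase_insert (hnot t₂ (by simpa using ht₂))]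
  have hcards := Finset.card_filter_add_card_filter_not
    (s := mf G S (k+1)) (p := fun s => ∀ e ∈ s, u ∉ e)
  unfold mm
  rw [← hcards, ← hsplit, hcov, Finset.card_biUnion hdisj]
  congr 1
  exact Finset.sum_congr rfl fun v hv => Finset.card_image_of_injOn (hinj v hv)

lemma sym2_exists_mem (e : Sym2 V) : ∃ v, v ∈ e := by
  induction e using Sym2.inductionOn with
  | _ a b => exact ⟨a, by simp⟩

open scoped Classical in
lemma mf_erase_eq (G : SimpleGraph V) (S : Finset V) (u : V) (k : ℕ) :
    mf G (S.erase u) k = (mf G S k).filter (fun s => ∀ e ∈ s, u ∉ e) := by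
  ext s
  simp only [mem_mf, Finset.mem_filter, isM]
  constructor
  · rintro ⟨hcard, h1, h2, h3⟩
    refine ⟨⟨hcard, h1, fun e he v hv => Finset.mem_of_mem_erase (h2 e he v hv), h3⟩,
      fun e he hue => (Finset.ne_of_mem_erase (h2 e he u hue)) rfl⟩
  · rintro ⟨⟨hcard, h1, h2, h3⟩, h4⟩
    exact ⟨hcard, h1, fun e he v hv => Finset.mem_erase.2
      ⟨fun hvu => h4 e he (hvu ▸ hv), h2 e he v hv⟩, h3⟩

lemma mm_sum_erase (G : SimpleGraph V) (S : Finset V) (k : ℕ) :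
    ∑ u ∈ S, mm G (S.erase u) k = (S.card - 2*k) * mm G S k := by
  classical
  have h1 : ∀ u, mm G (S.erase u) k =
      ∑ s ∈ mf G S k, if (∀ e ∈ s, u ∉ e) then 1 else 0 := by
    intro u
    rw [mm, mf_erase_eq, Finset.card_filter]
  rw [Finset.sum_congr rfl (fun u _ => h1 u), Finset.sum_comm]
  have h2 : ∀ s ∈ mf G S k, (∑ u ∈ S, if (∀ e ∈ s, u ∉ e) then 1 else 0) = S.card - 2*k := by
    intro s hs
    obtain ⟨hcard, hM⟩ := mem_mf.1 hs
    rw [← Finset.card_filter]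
    have hneg : S.filter (fun u => ¬ ∀ e ∈ s, u ∉ e) = s.biUnion (fun e => S.filter (· ∈ e)) := by
      ext u
      simp only [Finset.mem_filter, Finset.mem_biUnion]
      push_neg
      tauto
    have hdisj : ∀ x ∈ s, ∀ y ∈ s, x ≠ y →
        Disjoint (S.filter (· ∈ x)) (S.filter (· ∈ y)) := by
      intro x hx y hy hne
      rw [Finset.disjoint_left]
      intro v hv hv'
      exact (hM.2.2 hx hy hne v (Finset.mem_filter.1 hv).2) (Finset.mem_filter.1 hv').2
    have hcard2 : (s.biUnion (fun e => S.filter (· ∈ e))).card = 2 * k := by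
      rw [Finset.card_biUnion hdisj]
      rw [Finset.sum_congr rfl (fun e he => ?_), Finset.sum_const, smul_eq_mul, mul_comm, hcard]
      obtain ⟨a, b, hab, -, -, -, -, hfil⟩ := edge_filter_eq hM he
      rw [hfil, Finset.card_insert_of_notMem (by simp [hab]), Finset.card_singleton]
    have := Finset.card_filter_add_card_filter_not
      (s := S) (p := fun u => ∀ e ∈ s, u ∉ e)
    rw [hneg, hcard2] at this
    omega
  rw [Finset.sum_congr rfl h2, Finset.sum_const, smul_eq_mul, mul_comm, mm]

lemma mm_union (G : SimpleGraph V) {A B : Finset V} (hAB : Disjoint A B)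
    (hE : ∀ a ∈ A, ∀ b ∈ B, ¬ G.Adj a b) (k : ℕ) :
    mm G (A ∪ B) k = ∑ p ∈ Finset.HasAntidiagonal.antidiagonal k, mm G A p.1 * mm G B p.2 := by
  classical
  set FA : Finset (Sym2 V) → Finset (Sym2 V) := fun s => s.filter (fun e => ∀ v ∈ e, v ∈ A)
    with hFA
  set FB : Finset (Sym2 V) → Finset (Sym2 V) := fun s => s.filter (fun e => ∀ v ∈ e, v ∈ B)
    with hFB
  -- each edge of a matching in A ∪ B lies entirely in A or in B
  have hside : ∀ {kk} {s}, s ∈ mf G (A ∪ B) kk → ∀ e ∈ s,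
      (∀ v ∈ e, v ∈ A) ∨ (∀ v ∈ e, v ∈ B) := by
    intro kk s hs e he
    obtain ⟨hcard, hM⟩ := mem_mf.1 hs
    obtain ⟨a, b, hab, rfl, ha, hb, hadj, -⟩ := edge_filter_eq hM he
    rcases Finset.mem_union.1 ha with haA | haB
    · rcases Finset.mem_union.1 hb with hbA | hbB
      · left; intro v hv; rcases Sym2.mem_iff.1 hv with rfl | rfl <;> assumption
      · exact absurd hadj (hE a haA b hbB)
    · rcases Finset.mem_union.1 hb with hbA | hbB
      · exact absurd hadj.symm (hE b hbA a haB)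
      · right; intro v hv; rcases Sym2.mem_iff.1 hv with rfl | rfl <;> assumption
  have hAB' : ∀ (e : Sym2 V), (∀ v ∈ e, v ∈ A) → (∀ v ∈ e, v ∈ B) → False := by
    intro e h1 h2
    obtain ⟨v, hv⟩ := sym2_exists_mem e
    exact Finset.disjoint_left.1 hAB (h1 v hv) (h2 v hv)
  have hmemA : ∀ {kk} {s}, s ∈ mf G (A ∪ B) kk → FA s ∈ mf G A (FA s).card := by
    intro kk s hs
    obtain ⟨hcard, h1, h2, h3⟩ := mem_mf.1 hs
    exact mem_mf.2 ⟨rfl, fun e he => h1 (Finset.mem_of_mem_filter _ he),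
      fun e he => (Finset.mem_filter.1 he).2,
      h3.mono (Finset.coe_subset.2 (by rw [hFA]; exact Finset.filter_subset _ _))⟩
  have hmemB : ∀ {kk} {s}, s ∈ mf G (A ∪ B) kk → FB s ∈ mf G B (FB s).card := by
    intro kk s hs
    obtain ⟨hcard, h1, h2, h3⟩ := mem_mf.1 hs
    exact mem_mf.2 ⟨rfl, fun e he => h1 (Finset.mem_of_mem_filter _ he),
      fun e he => (Finset.mem_filter.1 he).2,
      h3.mono (Finset.coe_subset.2 (by rw [hFB]; exact Finset.filter_subset _ _))⟩
  have hsplit : ∀ {kk} {s}, s ∈ mf G (A ∪ B) kk → FA s ∪ FB s = s ∧ Disjoint (FA s) (FB s) := by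
    intro kk s hs
    constructor
    · ext e
      simp only [Finset.mem_union, hFA, hFB, Finset.mem_filter]
      constructor
      · rintro (⟨he, -⟩ | ⟨he, -⟩) <;> exact he
      · intro he
        rcases hside hs e he with h | h
        · exact Or.inl ⟨he, h⟩
        · exact Or.inr ⟨he, h⟩
    · rw [Finset.disjoint_left]
      rintro e he he'
      exact hAB' e (Finset.mem_filter.1 he).2 (Finset.mem_filter.1 he').2
  -- recovery from a disjoint pair
  have hrec : ∀ {i j} {t₁ t₂}, t₁ ∈ mf G A i → t₂ ∈ mf G B j →
      FA (t₁ ∪ t₂) = t₁ ∧ FB (t₁ ∪ t₂) = t₂ := by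
    intro i j t₁ t₂ ht₁ ht₂
    obtain ⟨hc₁, h11, h12, h13⟩ := mem_mf.1 ht₁
    obtain ⟨hc₂, h21, h22, h23⟩ := mem_mf.1 ht₂
    constructor
    · ext e
      simp only [hFA, Finset.mem_filter, Finset.mem_union]
      constructor
      · rintro ⟨he | he, hA⟩
        · exact he
        · exact absurd (hAB' e hA (h22 e he)) (by simp)
      · intro he
        exact ⟨Or.inl he, h12 e he⟩
    · ext e
      simp only [hFB, Finset.mem_filter, Finset.mem_union]
      constructor
      · rintro ⟨he | he, hB⟩
        · exact absurd (hAB' e (h12 e he) hB) (by simp)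
        · exact he
      · intro he
        exact ⟨Or.inr he, h22 e he⟩
  have hunionmem : ∀ {i j} {t₁ t₂}, i + j = k → t₁ ∈ mf G A i → t₂ ∈ mf G B j →
      t₁ ∪ t₂ ∈ mf G (A ∪ B) k := by
    intro i j t₁ t₂ hij ht₁ ht₂
    obtain ⟨hc₁, h11, h12, h13⟩ := mem_mf.1 ht₁
    obtain ⟨hc₂, h21, h22, h23⟩ := mem_mf.1 ht₂
    have hdisj : Disjoint t₁ t₂ := by
      rw [Finset.disjoint_left]
      intro e he he'
      exact hAB' e (h12 e he) (h22 e he')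
    refine mem_mf.2 ⟨by rw [Finset.card_union_of_disjoint hdisj, hc₁, hc₂, hij], ?_, ?_, ?_⟩
    · intro e he
      rcases Finset.mem_union.1 he with h | h
      · exact h11 h
      · exact h21 h
    · intro e he v hv
      rcases Finset.mem_union.1 he with h | h
      · exact Finset.mem_union_left _ (h12 e h v hv)
      · exact Finset.mem_union_right _ (h22 e h v hv)
    · rw [Finset.coe_union]
      intro e he f hf hne v hv
      rcases he with he | he <;> rcases hf with hf | hf
      · exact h13 he hf hne v hv
      · intro hvf
        exact Finset.disjoint_left.1 hAB (h12 e (by exact_mod_cast he) v hv)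
          (h22 f (by exact_mod_cast hf) v hvf)
      · intro hvf
        exact Finset.disjoint_left.1 hAB (h12 f (by exact_mod_cast hf) v hvf)
          (h22 e (by exact_mod_cast he) v hv)
      · exact h23 he hf hne v hv
  have hcov : mf G (A ∪ B) k = (Finset.HasAntidiagonal.antidiagonal k).biUnion (fun p =>
      ((mf G A p.1) ×ˢ (mf G B p.2)).image (fun q => q.1 ∪ q.2)) := by
    ext s
    simp only [Finset.mem_biUnion, Finset.mem_image, Finset.mem_product,
      Finset.HasAntidiagonal.mem_antidiagonal, Prod.exists]
    constructor
    · intro hs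
      have h1 := hmemA hs
      have h2 := hmemB hs
      obtain ⟨hu, hd⟩ := hsplit hs
      refine ⟨(FA s).card, (FB s).card, ?_, FA s, FB s, ⟨h1, h2⟩, hu⟩
      rw [← Finset.card_union_of_disjoint hd, hu, (mem_mf.1 hs).1]
    · rintro ⟨i, j, hij, t₁, t₂, ⟨ht₁, ht₂⟩, rfl⟩
      exact hunionmem hij ht₁ ht₂
  have hdisjU : ∀ p₁ ∈ Finset.HasAntidiagonal.antidiagonal k, ∀ p₂ ∈ Finset.HasAntidiagonal.antidiagonal k, p₁ ≠ p₂ →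
      Disjoint (((mf G A p₁.1) ×ˢ (mf G B p₁.2)).image (fun q => q.1 ∪ q.2))
               (((mf G A p₂.1) ×ˢ (mf G B p₂.2)).image (fun q => q.1 ∪ q.2)) := by
    intro p₁ h₁ p₂ h₂ hne
    rw [Finset.disjoint_left]
    rintro s hs₁ hs₂
    obtain ⟨q₁, hq₁, rfl⟩ := Finset.mem_image.1 hs₁
    obtain ⟨q₂, hq₂, heq⟩ := Finset.mem_image.1 hs₂
    rw [Finset.mem_product] at hq₁ hq₂
    have e₁ := hrec hq₁.1 hq₁.2
    have e₂ := hrec hq₂.1 hq₂.2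
    rw [heq] at e₂
    apply hne
    have c1 : p₁.1 = q₁.1.card := ((mem_mf.1 hq₁.1).1).symm
    have c2 : p₂.1 = q₂.1.card := ((mem_mf.1 hq₂.1).1).symm
    have c3 : p₁.2 = q₁.2.card := ((mem_mf.1 hq₁.2).1).symm
    have c4 : p₂.2 = q₂.2.card := ((mem_mf.1 hq₂.2).1).symm
    have h11 : q₁.1 = q₂.1 := e₁.1.symm.trans e₂.1
    have h22 : q₁.2 = q₂.2 := e₁.2.symm.trans e₂.2
    ext1
    · rw [c1, c2, h11]
    · rw [c3, c4, h22]
  have hinjU : ∀ p ∈ Finset.HasAntidiagonal.antidiagonal k,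
      Set.InjOn (fun q : Finset (Sym2 V) × Finset (Sym2 V) => q.1 ∪ q.2)
        ↑((mf G A p.1) ×ˢ (mf G B p.2)) := by
    intro p hp q₁ hq₁ q₂ hq₂ heq
    simp only [Finset.coe_product, Set.mem_prod, Finset.mem_coe] at hq₁ hq₂
    have e₁ := hrec hq₁.1 hq₁.2
    have e₂ := hrec hq₂.1 hq₂.2
    simp only at heq
    rw [heq] at e₁
    ext1
    · exact e₁.1.symm.trans e₂.1
    · exact e₁.2.symm.trans e₂.2
  unfold mm
  rw [hcov, Finset.card_biUnion hdisjU]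
  refine Finset.sum_congr rfl fun p hp => ?_
  rw [Finset.card_image_of_injOn (hinjU p hp), Finset.card_product]

lemma mu_def' (G : SimpleGraph V) (S : Finset V) {N : ℕ} (hN : S.card ≤ N) :
    mu G S = ∑ k ∈ Finset.range (N+1), C ((-1:ℝ)^k * (mm G S k : ℝ)) * X ^ (S.card - 2*k) := by
  rw [mu]
  refine Finset.sum_subset (Finset.range_subset_range.2 (by omega)) ?_
  intro k hk hk'
  rw [Finset.mem_range] at hk'
  rw [mm_eq_zero (show S.card < 2*k by omega)]
  simp

lemma mu_rec (G : SimpleGraph V) {S : Finset V} {u : V} (hu : u ∈ S) :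
    mu G S = X * mu G (S.erase u) - ∑ v ∈ nbr G S u, mu G ((S.erase u).erase v) := by
  classical
  set n := S.card with hn
  have hn1 : 1 ≤ n := Finset.card_pos.2 ⟨u, hu⟩
  have hcardE : (S.erase u).card = n - 1 := by rw [Finset.card_erase_of_mem hu]
  have hXmu : X * mu G (S.erase u) =
      ∑ k ∈ Finset.range (n+1), C ((-1:ℝ)^k * (mm G (S.erase u) k : ℝ)) * X ^ (n - 2*k) := by
    rw [Finset.sum_range_succ, mm_eq_zero (show (S.erase u).card < 2*n by omega)]
    simp only [Nat.cast_zero, mul_zero, map_zero, zero_mul, add_zero]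
    rw [mu, hcardE, show n - 1 + 1 = n from by omega, Finset.mul_sum]
    refine Finset.sum_congr rfl fun k hk => ?_
    by_cases h2 : 2*k ≤ n-1
    · rw [show n - 2*k = (n-1-2*k)+1 from by omega, pow_succ]
      ring
    · rw [mm_eq_zero (show (S.erase u).card < 2*k by omega)]
      simp
  have hsub : ∀ v ∈ nbr G S u, mu G ((S.erase u).erase v) =
      ∑ k ∈ Finset.range n, C ((-1:ℝ)^k * (mm G ((S.erase u).erase v) k : ℝ)) * X ^ (n - 2*(k+1)) := by
    intro v hv
    obtain ⟨hvS, hvu, -⟩ := mem_nbr.1 hv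
    have hvE : v ∈ S.erase u := Finset.mem_erase.2 ⟨hvu, hvS⟩
    have hn2 : 2 ≤ n := by
      have h1 := Finset.card_pos.2 ⟨v, hvE⟩
      omega
    have hcard2 : ((S.erase u).erase v).card = n - 2 := by
      rw [Finset.card_erase_of_mem hvE, hcardE]
      omega
    have hle : ((S.erase u).erase v).card ≤ n - 1 := by omega
    rw [mu_def' G _ hle, hcard2, show n - 1 + 1 = n from by omega]
    exact Finset.sum_congr rfl fun k hk => by
      rw [show n - 2 - 2*k = n - 2*(k+1) from by omega]
  -- main computation
  rw [mu, Finset.sum_range_succ']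
  have h0 : C ((-1:ℝ)^0 * (mm G S 0 : ℝ)) * X ^ (n - 2*0) = X ^ n := by
    simp [mm_zero]
  rw [h0]
  have hterm : ∀ k ∈ Finset.range n,
      C ((-1:ℝ)^(k+1) * (mm G S (k+1) : ℝ)) * X ^ (n - 2*(k+1)) =
      C ((-1:ℝ)^(k+1) * (mm G (S.erase u) (k+1) : ℝ)) * X ^ (n - 2*(k+1)) +
      ∑ v ∈ nbr G S u,
        (-1) * (C ((-1:ℝ)^k * (mm G ((S.erase u).erase v) k : ℝ)) * X ^ (n - 2*(k+1))) := by
    intro k hk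
    rw [mm_rec G hu k]
    have hc : ((mm G (S.erase u) (k+1) + ∑ v ∈ nbr G S u, mm G ((S.erase u).erase v) k : ℕ) : ℝ)
        = (mm G (S.erase u) (k+1) : ℝ) +
          ∑ v ∈ nbr G S u, (mm G ((S.erase u).erase v) k : ℝ) := by
      push_cast
      ring
    rw [hc, mul_add, C_add, add_mul]
    congr 1
    rw [Finset.mul_sum, map_sum, Finset.sum_mul]
    refine Finset.sum_congr rfl fun v hv => ?_
    rw [show ((-1:ℝ))^(k+1) * (mm G ((S.erase u).erase v) k : ℝ)
        = -((-1:ℝ)^k * (mm G ((S.erase u).erase v) k : ℝ)) from by ring, map_neg, neg_mul,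
      neg_one_mul]
  rw [Finset.sum_congr rfl hterm, Finset.sum_add_distrib]
  have hgrpA : (∑ k ∈ Finset.range n,
      C ((-1:ℝ)^(k+1) * (mm G (S.erase u) (k+1) : ℝ)) * X ^ (n - 2*(k+1))) + X ^ n =
      X * mu G (S.erase u) := by
    rw [hXmu, Finset.sum_range_succ']
    congr 1
    simp [mm_zero]
  have hgrpB : (∑ k ∈ Finset.range n, ∑ v ∈ nbr G S u,
      (-1) * (C ((-1:ℝ)^k * (mm G ((S.erase u).erase v) k : ℝ)) * X ^ (n - 2*(k+1)))) =
      - ∑ v ∈ nbr G S u, mu G ((S.erase u).erase v) := by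
    rw [Finset.sum_comm, ← Finset.sum_neg_distrib]
    refine Finset.sum_congr rfl fun v hv => ?_
    rw [hsub v hv, ← Finset.sum_neg_distrib]
    exact Finset.sum_congr rfl fun k hk => by rw [neg_one_mul]
  calc (∑ k ∈ Finset.range n,
      C ((-1:ℝ)^(k+1) * (mm G (S.erase u) (k+1) : ℝ)) * X ^ (n - 2*(k+1))) +
      (∑ k ∈ Finset.range n, ∑ v ∈ nbr G S u,
      (-1) * (C ((-1:ℝ)^k * (mm G ((S.erase u).erase v) k : ℝ)) * X ^ (n - 2*(k+1)))) + X ^ n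
      = (X * mu G (S.erase u)) + (- ∑ v ∈ nbr G S u, mu G ((S.erase u).erase v)) := by
        rw [← hgrpA, hgrpB]; ring
    _ = X * mu G (S.erase u) - ∑ v ∈ nbr G S u, mu G ((S.erase u).erase v) := by ring

lemma mu_derivative (G : SimpleGraph V) (S : Finset V) :
    derivative (mu G S) = ∑ u ∈ S, mu G (S.erase u) := by
  classical
  rcases Finset.eq_empty_or_nonempty S with rfl | hS
  · simp [mu_empty]
  set n := S.card with hn
  have hn1 : 1 ≤ n := Finset.card_pos.2 hS
  have hRHS : ∀ u ∈ S, mu G (S.erase u) =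
      ∑ k ∈ Finset.range n, C ((-1:ℝ)^k * (mm G (S.erase u) k : ℝ)) * X ^ (n-1-2*k) := by
    intro u hu
    rw [mu, Finset.card_erase_of_mem hu]
    rw [show n - 1 + 1 = n from by omega]
  rw [Finset.sum_congr rfl hRHS, Finset.sum_comm]
  rw [mu, derivative_sum]
  have hder : ∀ k, derivative (C ((-1:ℝ)^k * (mm G S k : ℝ)) * X ^ (n - 2*k)) =
      C ((-1:ℝ)^k * (((n - 2*k) * mm G S k : ℕ) : ℝ)) * X ^ (n-1-2*k) := by
    intro k
    rw [derivative_C_mul, derivative_X_pow, ← mul_assoc, ← C_mul,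
      show n - 2*k - 1 = n-1-2*k from by omega]
    congr 1
    push_cast
    ring
  rw [Finset.sum_congr rfl (fun k _ => hder k)]
  rw [Finset.sum_range_succ]
  have hlast : C ((-1:ℝ)^n * (((n - 2*n) * mm G S n : ℕ) : ℝ)) * X ^ (n-1-2*n) = 0 := by
    rw [show n - 2*n = 0 from by omega]
    simp
  rw [hlast, add_zero]
  refine Finset.sum_congr rfl fun k hk => ?_
  rw [← mm_sum_erase, Nat.cast_sum, Finset.mul_sum, map_sum, Finset.sum_mul]

lemma mu_union (G : SimpleGraph V) {A B : Finset V} (hAB : Disjoint A B)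
    (hE : ∀ a ∈ A, ∀ b ∈ B, ¬ G.Adj a b) :
    mu G (A ∪ B) = mu G A * mu G B := by
  classical
  set n := A.card + B.card with hn
  have hcardU : (A ∪ B).card = n := by rw [Finset.card_union_of_disjoint hAB]
  have hA : A.card ≤ n := by omega
  have hB : B.card ≤ n := by omega
  rw [mu_def' G A hA, mu_def' G B hB, Finset.sum_mul_sum]
  have hterm : ∀ i ∈ Finset.range (n+1), ∀ j ∈ Finset.range (n+1),
      (C ((-1:ℝ)^i * (mm G A i : ℝ)) * X ^ (A.card - 2*i)) *
      (C ((-1:ℝ)^j * (mm G B j : ℝ)) * X ^ (B.card - 2*j)) =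
      C ((-1:ℝ)^(i+j) * ((mm G A i * mm G B j : ℕ) : ℝ)) * X ^ (n - 2*(i+j)) := by
    intro i hi j hj
    rw [mul_mul_mul_comm, ← C_mul, ← pow_add]
    by_cases h2 : 2*i ≤ A.card ∧ 2*j ≤ B.card
    · rw [show A.card - 2*i + (B.card - 2*j) = n - 2*(i+j) from by omega]
      congr 1
      push_cast
      ring
    · rcases not_and_or.1 h2 with h | h
      · rw [mm_eq_zero (show A.card < 2*i from by omega)]
        simp
      · rw [mm_eq_zero (show B.card < 2*j from by omega)]
        simp
  rw [Finset.sum_congr rfl (fun i hi => Finset.sum_congr rfl (fun j hj => hterm i hi j hj))]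
  -- now expand LHS
  rw [mu_def' G _ (le_of_eq hcardU), hcardU]
  have hmmU : ∀ k, (mm G (A ∪ B) k : ℝ) =
      ∑ p ∈ Finset.HasAntidiagonal.antidiagonal k, ((mm G A p.1 * mm G B p.2 : ℕ) : ℝ) := by
    intro k
    rw [mm_union G hAB hE k]
    push_cast
    ring
  have hinner : ∀ k ∈ Finset.range (n+1),
      C ((-1:ℝ)^k * (mm G (A ∪ B) k : ℝ)) * X ^ (n - 2*k) =
      ∑ p ∈ Finset.HasAntidiagonal.antidiagonal k,
        C ((-1:ℝ)^(p.1+p.2) * ((mm G A p.1 * mm G B p.2 : ℕ) : ℝ)) * X ^ (n - 2*(p.1+p.2)) := by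
    intro k hk
    rw [hmmU k, Finset.mul_sum, map_sum, Finset.sum_mul]
    refine Finset.sum_congr rfl fun p hp => ?_
    rw [Finset.HasAntidiagonal.mem_antidiagonal] at hp
    rw [hp]
  rw [Finset.sum_congr rfl hinner]
  have hdisj : ∀ k ∈ Finset.range (n+1), ∀ l ∈ Finset.range (n+1), k ≠ l →
      Disjoint (Finset.HasAntidiagonal.antidiagonal k) (Finset.HasAntidiagonal.antidiagonal l) := by
    intro k _ l _ hkl
    rw [Finset.disjoint_left]
    intro p hp hp'
    rw [Finset.HasAntidiagonal.mem_antidiagonal] at hp hp'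
    exact hkl (hp ▸ hp')
  rw [← Finset.sum_biUnion hdisj]
  rw [show ((Finset.range (n+1)).biUnion Finset.HasAntidiagonal.antidiagonal) =
      (Finset.range (n+1) ×ˢ Finset.range (n+1)).filter (fun p => p.1 + p.2 ≤ n) from ?_]
  · rw [Finset.sum_filter]
    rw [Finset.sum_product]
    refine Finset.sum_congr rfl fun i hi => Finset.sum_congr rfl fun j hj => ?_
    by_cases hle : i + j ≤ n
    · rw [if_pos hle]
    · rw [if_neg hle]
      rw [Finset.mem_range] at hi hj
      have hz : mm G A i * mm G B j = 0 := by
        rcases le_or_gt (2*i) A.card with hcas | hcas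
        · have hBj : B.card < 2*j := by omega
          rw [mm_eq_zero hBj, mul_zero]
        · rw [mm_eq_zero hcas, zero_mul]
      rw [hz]
      simp
  · ext p
    simp only [Finset.mem_biUnion, Finset.mem_filter, Finset.mem_product, Finset.mem_range,
      Finset.HasAntidiagonal.mem_antidiagonal]
    constructor
    · rintro ⟨k, hk, rfl⟩
      refine ⟨⟨by omega, by omega⟩, by omega⟩
    · rintro ⟨⟨h1, h2⟩, h3⟩
      exact ⟨p.1 + p.2, by omega, rfl⟩

lemma mu_comp_neg (G : SimpleGraph V) (S : Finset V) :
    (mu G S).comp (-X) = C ((-1:ℝ)^S.card) * mu G S := by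
  classical
  have hcomp : ∀ (f : ℕ → ℝ[X]) (t : Finset ℕ),
      (∑ k ∈ t, f k).comp (-X) = ∑ k ∈ t, (f k).comp (-X) := by
    intro f t
    simp only [Polynomial.comp, Polynomial.eval₂_finset_sum]
  rw [mu, hcomp, Finset.mul_sum]
  refine Finset.sum_congr rfl fun k hk => ?_
  rw [Polynomial.mul_comp, Polynomial.C_comp, Polynomial.pow_comp, Polynomial.X_comp]
  have hx : (-X : ℝ[X])^(S.card - 2*k) = C ((-1:ℝ)^(S.card - 2*k)) * X^(S.card - 2*k) := by
    rw [neg_pow]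
    congr 1
    rw [show ((-1:ℝ[X])) = C (-1:ℝ) from by simp, ← C_pow]
  rw [hx]
  by_cases h2 : 2*k ≤ S.card
  · have hsc : ((-1:ℝ))^(S.card - 2*k) = (-1:ℝ)^S.card := by
      have h1 : ((-1:ℝ))^(S.card - 2*k) * ((-1:ℝ))^(2*k) = (-1:ℝ)^S.card := by
        rw [← pow_add]
        congr 1
        omega
      have h2' : ((-1:ℝ))^(2*k) = 1 := by
        rw [pow_mul]
        norm_num
      rw [h2', mul_one] at h1
      exact h1
    rw [hsc]
    ring
  · rw [mm_eq_zero (show S.card < 2*k from by omega)]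
    simp

/-- complex matching polynomial -/
noncomputable def muC (G : SimpleGraph V) (S : Finset V) : Polynomial ℂ :=
  (mu G S).map (algebraMap ℝ ℂ)

lemma muC_empty (G : SimpleGraph V) : muC G (∅ : Finset V) = 1 := by
  rw [muC, mu_empty, Polynomial.map_one]

lemma muC_rec (G : SimpleGraph V) {S : Finset V} {u : V} (hu : u ∈ S) :
    muC G S = X * muC G (S.erase u) - ∑ v ∈ nbr G S u, muC G ((S.erase u).erase v) := by
  unfold muC
  rw [mu_rec G hu, Polynomial.map_sub, Polynomial.map_mul, Polynomial.map_X,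
    Polynomial.map_sum]

lemma complex_im_sum {ι : Type*} (s : Finset ι) (f : ι → ℂ) :
    (∑ i ∈ s, f i).im = ∑ i ∈ s, (f i).im := by
  induction s using Finset.cons_induction with
  | empty => simp
  | cons a t ha ih => simp [Finset.sum_cons, ih]

lemma muC_key (G : SimpleGraph V) : ∀ (n : ℕ) (S : Finset V), S.card ≤ n → ∀ z : ℂ, 0 < z.im →
    (muC G S).eval z ≠ 0 ∧
      ∀ u ∈ S, 0 < (((muC G S).eval z) / ((muC G (S.erase u)).eval z)).im := by
  intro n
  induction n with
  | zero =>
    intro S hS z hz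
    have hSe : S = ∅ := Finset.card_eq_zero.1 (Nat.le_zero.1 hS)
    subst hSe
    refine ⟨by rw [muC_empty]; simp, by simp⟩
  | succ n ih =>
    intro S hS z hz
    rcases Finset.eq_empty_or_nonempty S with rfl | hSne
    · refine ⟨by rw [muC_empty]; simp, by simp⟩
    have h2 : ∀ u ∈ S, 0 < (((muC G S).eval z) / ((muC G (S.erase u)).eval z)).im := by
      intro u hu
      have hcard : (S.erase u).card ≤ n := by
        rw [Finset.card_erase_of_mem hu]
        have := Finset.card_pos.2 ⟨u, hu⟩
        omega
      obtain ⟨hp_ne, hratios⟩ := ih (S.erase u) hcard z hz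
      set p := (muC G (S.erase u)).eval z with hp
      have hrec : (muC G S).eval z =
          z * p - ∑ v ∈ nbr G S u, (muC G ((S.erase u).erase v)).eval z := by
        rw [muC_rec G hu]
        simp [Polynomial.eval_finset_sum]
        exact Or.inl hp.symm
      have hratio : ((muC G S).eval z) / p =
          z - ∑ v ∈ nbr G S u, ((muC G ((S.erase u).erase v)).eval z / p) := by
        rw [hrec, sub_div, mul_div_assoc, div_self hp_ne, mul_one, Finset.sum_div]
      have hterm : ∀ v ∈ nbr G S u, ((muC G ((S.erase u).erase v)).eval z / p).im ≤ 0 := by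
        intro v hv
        obtain ⟨hvS, hvu, -⟩ := mem_nbr.1 hv
        have hvE : v ∈ S.erase u := Finset.mem_erase.2 ⟨hvu, hvS⟩
        have hr := hratios v hvE
        have : (muC G ((S.erase u).erase v)).eval z / p = (p / (muC G ((S.erase u).erase v)).eval z)⁻¹ := by
          rw [inv_div]
        rw [this, Complex.inv_im]
        apply div_nonpos_of_nonpos_of_nonneg
        · linarith
        · exact Complex.normSq_nonneg _
      rw [hratio, Complex.sub_im, complex_im_sum]
      have hsum : (∑ v ∈ nbr G S u, ((muC G ((S.erase u).erase v)).eval z / p).im) ≤ 0 :=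
        Finset.sum_nonpos hterm
      linarith
    refine ⟨?_, h2⟩
    obtain ⟨u, hu⟩ := hSne
    have hcard : (S.erase u).card ≤ n := by
      rw [Finset.card_erase_of_mem hu]
      have := Finset.card_pos.2 ⟨u, hu⟩
      omega
    have hp_ne := (ih (S.erase u) hcard z hz).1
    have hr := h2 u hu
    have hratio_ne : ((muC G S).eval z) / ((muC G (S.erase u)).eval z) ≠ 0 := by
      intro h0
      rw [h0] at hr
      simp at hr
    intro h0
    rw [h0, zero_div] at hratio_ne
    exact hratio_ne rfl

lemma muC_eval_conj (G : SimpleGraph V) (S : Finset V) (z : ℂ) :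
    (muC G S).eval (starRingEnd ℂ z) = starRingEnd ℂ ((muC G S).eval z) := by
  rw [Polynomial.eval_eq_sum_range, Polynomial.eval_eq_sum_range, map_sum]
  refine Finset.sum_congr rfl fun i hi => ?_
  rw [map_mul, map_pow]
  congr 1
  rw [muC, Polynomial.coeff_map]
  have : algebraMap ℝ ℂ ((mu G S).coeff i) = (((mu G S).coeff i : ℝ) : ℂ) := rfl
  rw [this, Complex.conj_ofReal]

lemma muC_roots_real (G : SimpleGraph V) (S : Finset V) :
    ∀ z : ℂ, ((muC G S).IsRoot z) → z.im = 0 := by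
  intro z hz
  by_contra him
  rcases lt_or_gt_of_ne him with hlt | hgt
  · have h1 : 0 < (starRingEnd ℂ z).im := by
      rw [Complex.conj_im]
      linarith
    refine (muC_key G S.card S le_rfl (starRingEnd ℂ z) h1).1 ?_
    show (muC G S).eval (starRingEnd ℂ z) = 0
    rw [muC_eval_conj, show (muC G S).eval z = 0 from hz, map_zero]
  · exact (muC_key G S.card S le_rfl z hgt).1 hz

/-- real-rooted -/
def RRp (p : ℝ[X]) : Prop := Multiset.card p.roots = p.natDegree

lemma RRp_aux : ∀ (n : ℕ) (p : ℝ[X]), p.natDegree ≤ n → p ≠ 0 →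
    (∀ z : ℂ, (p.map (algebraMap ℝ ℂ)).IsRoot z → z.im = 0) → RRp p := by
  intro n
  induction n with
  | zero =>
    intro p hdeg hne _
    unfold RRp
    have h1 := Polynomial.card_roots' p
    omega
  | succ n ih =>
    intro p hdeg hne hyp
    by_cases h0 : p.natDegree = 0
    · unfold RRp
      have h1 := Polynomial.card_roots' p
      omega
    · have hqne : p.map (algebraMap ℝ ℂ) ≠ 0 := by
        refine (Polynomial.map_ne_zero_iff ?_).2 hne
        exact (algebraMap ℝ ℂ).injective
      have hdq : 0 < (p.map (algebraMap ℝ ℂ)).degree := by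
        rw [Polynomial.degree_map]
        exact Polynomial.natDegree_pos_iff_degree_pos.1 (by omega)
      obtain ⟨z, hz⟩ := Complex.exists_root hdq
      have hzim : z.im = 0 := hyp z hz
      have hzre : z = ((z.re : ℝ) : ℂ) := by
        apply Complex.ext <;> simp [hzim]
      have hroot : p.IsRoot z.re := by
        have h3 : Polynomial.eval₂ (algebraMap ℝ ℂ) (algebraMap ℝ ℂ z.re) p = 0 := by
          rw [← Polynomial.eval_map]
          rw [show algebraMap ℝ ℂ z.re = z from by rw [hzre]; rfl]
          exact hz
        rw [Polynomial.eval₂_at_apply] at h3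
        have h4 : ((p.eval z.re : ℝ) : ℂ) = 0 := h3
        exact_mod_cast h4
      obtain ⟨q, hfac⟩ := Polynomial.dvd_iff_isRoot.2 hroot
      have hqne2 : q ≠ 0 := by
        rintro rfl
        rw [mul_zero] at hfac
        exact hne hfac
      have hXne : (X - C z.re : ℝ[X]) ≠ 0 := Polynomial.X_sub_C_ne_zero z.re
      have hdegfac : p.natDegree = 1 + q.natDegree := by
        rw [hfac, Polynomial.natDegree_mul hXne hqne2, Polynomial.natDegree_X_sub_C]
      have hrrq : RRp q := by
        refine ih q (by omega) hqne2 ?_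
        intro w hw
        refine hyp w ?_
        rw [hfac, Polynomial.map_mul, Polynomial.IsRoot, Polynomial.eval_mul]
        rw [Polynomial.IsRoot] at hw
        rw [hw, mul_zero]
      unfold RRp at hrrq ⊢
      rw [hfac, Polynomial.roots_mul (hfac ▸ hne), Polynomial.roots_X_sub_C,
        Polynomial.natDegree_mul hXne hqne2, Polynomial.natDegree_X_sub_C,
        Multiset.card_add, Multiset.card_singleton]
      omega

lemma mu_RRp (G : SimpleGraph V) (S : Finset V) : RRp (mu G S) :=
  RRp_aux (mu G S).natDegree (mu G S) le_rfl (mu_ne_zero G S) (muC_roots_real G S)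

lemma RRp_mul_iff {p q : ℝ[X]} (hp : p ≠ 0) (hq : q ≠ 0) : RRp (p * q) ↔ (RRp p ∧ RRp q) := by
  unfold RRp
  rw [Polynomial.roots_mul (mul_ne_zero hp hq), Polynomial.natDegree_mul hp hq,
    Multiset.card_add]
  have h1 := Polynomial.card_roots' p
  have h2 := Polynomial.card_roots' q
  omega

lemma RRp_splits {p : ℝ[X]} (h : RRp p) : p.Splits :=
  (Polynomial.splits_iff_card_roots).2 h

noncomputable def topRoot (p : ℝ[X]) : ℝ :=
  if h : p.roots.toFinset.Nonempty then p.roots.toFinset.max' h else 0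

lemma topRoot_mem {p : ℝ[X]} (h : p.roots ≠ 0) : topRoot p ∈ p.roots := by
  classical
  have hne : p.roots.toFinset.Nonempty := by rwa [Multiset.toFinset_nonempty]
  rw [topRoot, dif_pos hne]
  exact Multiset.mem_toFinset.1 (Finset.max'_mem _ hne)

lemma le_topRoot {p : ℝ[X]} {r : ℝ} (h : r ∈ p.roots) : r ≤ topRoot p := by
  classical
  have hne : p.roots.toFinset.Nonempty := ⟨r, Multiset.mem_toFinset.2 h⟩
  rw [topRoot, dif_pos hne]
  exact Finset.le_max' _ r (Multiset.mem_toFinset.2 h)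

lemma roots_ne_zero_of_RRp {p : ℝ[X]} (h : RRp p) (h1 : 1 ≤ p.natDegree) : p.roots ≠ 0 := by
  intro h0
  rw [RRp, h0] at h
  simp only [Multiset.card_zero] at h
  omega

lemma eval_eq_prod_roots {p : ℝ[X]} (hm : p.Monic) (hr : RRp p) (x : ℝ) :
    p.eval x = ((p.roots).map (fun r => x - r)).prod := by
  conv_lhs => rw [(RRp_splits hr).eq_prod_roots_of_monic hm]
  rw [Polynomial.eval_multiset_prod, Multiset.map_map]
  congr 1
  refine Multiset.map_congr rfl fun r hrr => ?_
  simp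

lemma multiset_prod_pos : ∀ {s : Multiset ℝ}, (∀ a ∈ s, 0 < a) → 0 < s.prod := by
  intro s
  induction s using Multiset.induction with
  | empty => intro _; simp
  | cons a t iht =>
    intro h
    rw [Multiset.prod_cons]
    exact mul_pos (h a (Multiset.mem_cons_self a t))
      (iht fun b hb => h b (Multiset.mem_cons_of_mem hb))

lemma multiset_prod_nonneg : ∀ {s : Multiset ℝ}, (∀ a ∈ s, 0 ≤ a) → 0 ≤ s.prod := by
  intro s
  induction s using Multiset.induction with
  | empty => intro _; simp
  | cons a t iht =>
    intro h
    rw [Multiset.prod_cons]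
    exact mul_nonneg (h a (Multiset.mem_cons_self a t))
      (iht fun b hb => h b (Multiset.mem_cons_of_mem hb))

lemma eval_pos_of_roots_lt {p : ℝ[X]} (hm : p.Monic) (hr : RRp p) {x : ℝ}
    (h : ∀ r ∈ p.roots, r < x) : 0 < p.eval x := by
  rw [eval_eq_prod_roots hm hr]
  refine multiset_prod_pos fun a ha => ?_
  obtain ⟨r, hrmem, rfl⟩ := Multiset.mem_map.1 ha
  have := h r hrmem
  linarith

lemma eval_nonneg_of_roots_le {p : ℝ[X]} (hm : p.Monic) (hr : RRp p) {x : ℝ}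
    (h : ∀ r ∈ p.roots, r ≤ x) : 0 ≤ p.eval x := by
  rw [eval_eq_prod_roots hm hr]
  refine multiset_prod_nonneg fun a ha => ?_
  obtain ⟨r, hrmem, rfl⟩ := Multiset.mem_map.1 ha
  have := h r hrmem
  linarith

lemma exists_root_ge_of_eval_nonpos {p : ℝ[X]} (hm : p.Monic) (hr : RRp p) {s : ℝ}
    (h : p.eval s ≤ 0) : ∃ r ∈ p.roots, s ≤ r := by
  by_contra hcon
  push_neg at hcon
  have := eval_pos_of_roots_lt hm hr hcon
  linarith

lemma exists_root_gt_of_eval_neg {p : ℝ[X]} (hm : p.Monic) (hr : RRp p) {s : ℝ}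
    (h : p.eval s < 0) : ∃ r ∈ p.roots, s < r := by
  by_contra hcon
  push_neg at hcon
  have := eval_nonneg_of_roots_le hm hr hcon
  linarith

lemma quot_monic_RRp {p : ℝ[X]} (hm : p.Monic) (hr : RRp p) (s : ℝ) :
    ((X - C s)^(p.rootMultiplicity s) * (p /ₘ (X - C s)^(p.rootMultiplicity s)) = p) ∧
    (p /ₘ (X - C s)^(p.rootMultiplicity s)).Monic ∧
    RRp (p /ₘ (X - C s)^(p.rootMultiplicity s)) ∧
    (p /ₘ (X - C s)^(p.rootMultiplicity s)).roots ≤ p.roots := by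
  set m := p.rootMultiplicity s with hmdef
  set q := p /ₘ (X - C s)^m with hq
  have hfac : (X - C s)^m * q = p := Polynomial.pow_mul_divByMonic_rootMultiplicity_eq p s
  have hpowm : ((X - C s)^m).Monic := (Polynomial.monic_X_sub_C s).pow m
  have hqne : q ≠ 0 := by
    intro h0
    rw [h0, mul_zero] at hfac
    exact hm.ne_zero hfac.symm
  have hqm : q.Monic := hpowm.of_mul_monic_left (hfac.symm ▸ hm)
  have hRRq : RRp q := by
    have hRRfac : RRp ((X - C s)^m * q) := hfac.symm ▸ hr
    exact ((RRp_mul_iff (pow_ne_zero _ (Polynomial.X_sub_C_ne_zero s)) hqne).1 hRRfac).2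
  refine ⟨hfac, hqm, hRRq, ?_⟩
  have hroots : p.roots = ((X - C s)^m).roots + q.roots := by
    rw [← hfac, Polynomial.roots_mul (hfac.symm ▸ hm.ne_zero)]
  rw [hroots]
  exact Multiset.le_add_left _ _

lemma quot_eval_pos {p : ℝ[X]} (hm : p.Monic) (hr : RRp p) {s : ℝ}
    (hall : ∀ r ∈ p.roots, r ≤ s) :
    0 < (p /ₘ (X - C s)^(p.rootMultiplicity s)).eval s := by
  obtain ⟨hfac, hqm, hRRq, hle⟩ := quot_monic_RRp hm hr s
  have hne := Polynomial.eval_divByMonic_pow_rootMultiplicity_ne_zero s hm.ne_zero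
  refine eval_pos_of_roots_lt hqm hRRq fun r hrr => ?_
  have hrle : r ≤ s := hall r (Multiset.subset_of_le hle hrr)
  rcases lt_or_eq_of_le hrle with h | h
  · exact h
  · exfalso
    apply hne
    subst h
    exact Polynomial.isRoot_of_mem_roots hrr

lemma mult_le_one_of_derivative_ne_zero {p : ℝ[X]} {s : ℝ}
    (hd : p.derivative.eval s ≠ 0) : p.rootMultiplicity s ≤ 1 := by
  by_contra h
  push_neg at h
  have hdvd : (X - C s)^2 ∣ p :=
    dvd_trans (pow_dvd_pow _ (by omega)) (Polynomial.pow_rootMultiplicity_dvd p s)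
  obtain ⟨q, hq⟩ := hdvd
  apply hd
  rw [hq, Polynomial.derivative_mul, Polynomial.derivative_pow]
  simp [sub_self]

lemma roots_erase_le (G : SimpleGraph V) : ∀ (n : ℕ) (S : Finset V), S.card ≤ n →
    ∀ u ∈ S, ∀ r ∈ (mu G (S.erase u)).roots, r ≤ topRoot (mu G S) := by
  intro n
  induction n with
  | zero =>
    intro S hS u hu
    have hSe : S = ∅ := Finset.card_eq_zero.1 (Nat.le_zero.1 hS)
    subst hSe
    exact absurd hu (Finset.notMem_empty u)
  | succ n ih =>
    intro S hS u hu r hr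
    have hroots_ne : (mu G (S.erase u)).roots ≠ 0 := by
      intro h0
      rw [h0] at hr
      simp at hr
    set s := topRoot (mu G (S.erase u)) with hs
    have hsmem : s ∈ (mu G (S.erase u)).roots := topRoot_mem hroots_ne
    have hrle : r ≤ s := le_topRoot hr
    have hcard : (S.erase u).card ≤ n := by
      rw [Finset.card_erase_of_mem hu]
      have := Finset.card_pos.2 ⟨u, hu⟩
      omega
    have heval : (mu G S).eval s ≤ 0 := by
      rw [mu_rec G hu]
      simp only [Polynomial.eval_sub, Polynomial.eval_mul, Polynomial.eval_X,
        Polynomial.eval_finset_sum]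
      have h1 : (mu G (S.erase u)).eval s = 0 := Polynomial.isRoot_of_mem_roots hsmem
      rw [h1, mul_zero]
      have h2 : 0 ≤ ∑ v ∈ nbr G S u, (mu G ((S.erase u).erase v)).eval s := by
        refine Finset.sum_nonneg fun v hv => ?_
        obtain ⟨hvS, hvu, -⟩ := mem_nbr.1 hv
        have hvE : v ∈ S.erase u := Finset.mem_erase.2 ⟨hvu, hvS⟩
        refine eval_nonneg_of_roots_le (mu_monic G _) (mu_RRp G _) fun r' hr' => ?_
        exact ih (S.erase u) hcard v hvE r' hr'
      linarith
    obtain ⟨r', hr'mem, hr'ge⟩ :=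
      exists_root_ge_of_eval_nonpos (mu_monic G S) (mu_RRp G S) heval
    exact le_trans (le_trans hrle hr'ge) (le_topRoot hr'mem)

def ReachIn (G : SimpleGraph V) (S : Finset V) (u w : V) : Prop :=
  ∃ p : G.Walk u w, ∀ x ∈ p.support, x ∈ S

lemma reachIn_refl {G : SimpleGraph V} {S : Finset V} {u : V} (hu : u ∈ S) :
    ReachIn G S u u :=
  ⟨SimpleGraph.Walk.nil, by simp [hu]⟩

lemma reachIn_symm {G : SimpleGraph V} {S : Finset V} {u w : V} :
    ReachIn G S u w → ReachIn G S w u := by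
  rintro ⟨p, hp⟩
  refine ⟨p.reverse, fun x hx => hp x ?_⟩
  rw [SimpleGraph.Walk.support_reverse] at hx
  exact List.mem_reverse.1 hx

lemma reachIn_trans {G : SimpleGraph V} {S : Finset V} {u w x : V} :
    ReachIn G S u w → ReachIn G S w x → ReachIn G S u x := by
  rintro ⟨p, hp⟩ ⟨q, hq⟩
  refine ⟨p.append q, fun y hy => ?_⟩
  rw [SimpleGraph.Walk.mem_support_append_iff] at hy
  rcases hy with h | h
  · exact hp y h
  · exact hq y h

lemma reachIn_mem_right {G : SimpleGraph V} {S : Finset V} {u w : V}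
    (h : ReachIn G S u w) : w ∈ S := by
  obtain ⟨p, hp⟩ := h
  exact hp w p.end_mem_support

lemma reachIn_mem_left {G : SimpleGraph V} {S : Finset V} {u w : V}
    (h : ReachIn G S u w) : u ∈ S := by
  obtain ⟨p, hp⟩ := h
  exact hp u p.start_mem_support

lemma reachIn_mono {G : SimpleGraph V} {S T : Finset V} (hST : S ⊆ T) {u w : V}
    (h : ReachIn G S u w) : ReachIn G T u w := by
  obtain ⟨p, hp⟩ := h
  exact ⟨p, fun x hx => hST (hp x hx)⟩

lemma reachIn_adj {G : SimpleGraph V} {S : Finset V} {u w : V} (h : G.Adj u w)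
    (hu : u ∈ S) (hw : w ∈ S) : ReachIn G S u w := by
  refine ⟨SimpleGraph.Walk.cons h SimpleGraph.Walk.nil, fun x hx => ?_⟩
  simp only [SimpleGraph.Walk.support_cons, SimpleGraph.Walk.support_nil,
    List.mem_cons, List.mem_singleton] at hx
  rcases hx with rfl | hx
  · exact hu
  · simp at hx
    subst hx
    exact hw

open scoped Classical in
noncomputable def compOf (G : SimpleGraph V) (S : Finset V) (u : V) : Finset V :=
  S.filter (ReachIn G S u)

open scoped Classical in
lemma mem_compOf {G : SimpleGraph V} {S : Finset V} {u v : V} :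
    v ∈ compOf G S u ↔ v ∈ S ∧ ReachIn G S u v := by
  simp [compOf]

lemma compOf_subset {G : SimpleGraph V} {S : Finset V} {u : V} :
    compOf G S u ⊆ S := fun v hv => (mem_compOf.1 hv).1

lemma self_mem_compOf {G : SimpleGraph V} {S : Finset V} {u : V} (hu : u ∈ S) :
    u ∈ compOf G S u := mem_compOf.2 ⟨hu, reachIn_refl hu⟩

lemma no_cross_edges {G : SimpleGraph V} {S : Finset V} {u : V} :
    ∀ a ∈ compOf G S u, ∀ b ∈ S \ compOf G S u, ¬ G.Adj a b := by
  intro a ha b hb hadj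
  rw [Finset.mem_sdiff] at hb
  apply hb.2
  obtain ⟨haS, hreach⟩ := mem_compOf.1 ha
  exact mem_compOf.2 ⟨hb.1, reachIn_trans hreach (reachIn_adj hadj haS hb.1)⟩

/-- everything reachable from `u` in `S` is reachable within the component -/
lemma reachIn_compOf {G : SimpleGraph V} {S : Finset V} {u w : V}
    (h : ReachIn G S u w) : ReachIn G (compOf G S u) u w := by
  obtain ⟨p, hp⟩ := h
  refine ⟨p, fun x hx => ?_⟩
  refine mem_compOf.2 ⟨hp x hx, ?_⟩
  exact ⟨p.takeUntil x hx, fun y hy => hp y (SimpleGraph.Walk.support_takeUntil_subset _ hx hy)⟩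

def ConnIn (G : SimpleGraph V) (S : Finset V) : Prop :=
  ∀ a ∈ S, ∀ b ∈ S, ReachIn G S a b

lemma connIn_compOf {G : SimpleGraph V} {S : Finset V} {u : V} :
    ConnIn G (compOf G S u) := by
  intro a ha b hb
  obtain ⟨haS, hra⟩ := mem_compOf.1 ha
  obtain ⟨hbS, hrb⟩ := mem_compOf.1 hb
  exact reachIn_trans (reachIn_symm (reachIn_compOf hra)) (reachIn_compOf hrb)

lemma compOf_sdiff {G : SimpleGraph V} {S : Finset V} {u t : V}
    (ht : t ∈ S \ compOf G S u) : compOf G (S \ compOf G S u) t = compOf G S t := by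
  ext x
  rw [Finset.mem_sdiff] at ht
  simp only [mem_compOf]
  constructor
  · rintro ⟨hx, hr⟩
    rw [Finset.mem_sdiff] at hx
    exact ⟨hx.1, reachIn_mono (Finset.sdiff_subset) hr⟩
  · rintro ⟨hx, hr⟩
    obtain ⟨p, hp⟩ := hr
    have hsupp : ∀ y ∈ p.support, y ∈ S \ compOf G S u := by
      intro y hy
      rw [Finset.mem_sdiff]
      refine ⟨hp y hy, fun hyc => ?_⟩
      obtain ⟨-, hru⟩ := mem_compOf.1 hyc
      have hty : ReachIn G S t y :=
        ⟨p.takeUntil y hy, fun z hz => hp z (SimpleGraph.Walk.support_takeUntil_subset _ hy hz)⟩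
      exact ht.2 (mem_compOf.2 ⟨ht.1, reachIn_trans hru (reachIn_symm hty)⟩)
    exact ⟨hsupp x p.end_mem_support, p, hsupp⟩

lemma connIn_univ {G : SimpleGraph V} (hG : G.Connected) : ConnIn G (Finset.univ : Finset V) := by
  intro a _ b _
  obtain ⟨p⟩ := hG.preconnected a b
  exact ⟨p, fun x _ => Finset.mem_univ x⟩

lemma nbr_in_comp_aux (G : SimpleGraph V) (S : Finset V) (u : V) : ∀ (t : V) (p : G.Walk t u),
    (∀ x ∈ p.support, x ∈ S) → t ≠ u → ∃ v, v ∈ compOf G (S.erase u) t ∧ G.Adj u v := by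
  intro t p
  induction p with
  | nil =>
    intro _ h
    exact absurd rfl h
  | @cons a b c h q ih =>
    intro hsupp htu
    have hsupp_q : ∀ x ∈ q.support, x ∈ S := fun x hx => hsupp x
      (by rw [SimpleGraph.Walk.support_cons]; exact List.mem_cons_of_mem _ hx)
    have haS : a ∈ S := hsupp a (SimpleGraph.Walk.start_mem_support _)
    by_cases hbc : b = c
    · subst hbc
      exact ⟨a, self_mem_compOf (Finset.mem_erase.2 ⟨htu, haS⟩), h.symm⟩
    · obtain ⟨v, hv, hadj⟩ := ih hsupp_q hbc
      refine ⟨v, ?_, hadj⟩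
      have hbS : b ∈ S := hsupp_q b (SimpleGraph.Walk.start_mem_support _)
      have hreach : ReachIn G (S.erase c) a b :=
        reachIn_adj h (Finset.mem_erase.2 ⟨htu, haS⟩) (Finset.mem_erase.2 ⟨hbc, hbS⟩)
      obtain ⟨hvmem, hrv⟩ := mem_compOf.1 hv
      exact mem_compOf.2 ⟨hvmem, reachIn_trans hreach hrv⟩

lemma nbr_in_comp {G : SimpleGraph V} {S : Finset V} (hconn : ConnIn G S) {u t : V}
    (hu : u ∈ S) (ht : t ∈ S.erase u) :
    ∃ v, v ∈ compOf G (S.erase u) t ∧ G.Adj u v := by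
  obtain ⟨p, hp⟩ := hconn t (Finset.mem_of_mem_erase ht) u hu
  exact nbr_in_comp_aux G S u t p hp (Finset.ne_of_mem_erase ht)

lemma mu_comp_split (G : SimpleGraph V) (W : Finset V) (t : V) :
    mu G W = mu G (compOf G W t) * mu G (W \ compOf G W t) := by
  conv_lhs => rw [show W = compOf G W t ∪ (W \ compOf G W t) from
    (Finset.union_sdiff_of_subset compOf_subset).symm]
  exact mu_union G Finset.disjoint_sdiff no_cross_edges

lemma mu_split_erase (G : SimpleGraph V) (W : Finset V) (t v : V) :
    mu G (W.erase v) =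
      mu G ((compOf G W t).erase v) * mu G ((W \ compOf G W t).erase v) := by
  have h1 : W.erase v = (compOf G W t).erase v ∪ (W \ compOf G W t).erase v := by
    conv_lhs => rw [show W = compOf G W t ∪ (W \ compOf G W t) from
      (Finset.union_sdiff_of_subset compOf_subset).symm]
    exact Finset.erase_union_distrib _ _ _
  rw [h1]
  refine mu_union G ?_ ?_
  · exact Finset.disjoint_of_subset_left (Finset.erase_subset _ _)
      (Finset.disjoint_of_subset_right (Finset.erase_subset _ _) Finset.disjoint_sdiff)
  · intro a ha b hb
    exact no_cross_edges a (Finset.mem_of_mem_erase ha) b (Finset.mem_of_mem_erase hb)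

lemma exists_comp_root (G : SimpleGraph V) : ∀ (n : ℕ) (W : Finset V), W.card ≤ n →
    ∀ s : ℝ, s ∈ (mu G W).roots → ∃ t ∈ W, s ∈ (mu G (compOf G W t)).roots := by
  intro n
  induction n with
  | zero =>
    intro W hW s hs
    have hWe : W = ∅ := Finset.card_eq_zero.1 (Nat.le_zero.1 hW)
    subst hWe
    rw [mu_empty, Polynomial.roots_one] at hs
    simp at hs
  | succ n ih =>
    intro W hW s hs
    rcases Finset.eq_empty_or_nonempty W with rfl | ⟨w, hw⟩
    · rw [mu_empty, Polynomial.roots_one] at hs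
      simp at hs
    have hfac := mu_comp_split G W w
    rw [hfac, Polynomial.roots_mul (by rw [← hfac]; exact mu_ne_zero G W),
      Multiset.mem_add] at hs
    rcases hs with h | h
    · exact ⟨w, hw, h⟩
    · have hcard : (W \ compOf G W w).card ≤ n := by
        have h1 : (W \ compOf G W w).card < W.card := by
          refine Finset.card_lt_card ?_
          rw [Finset.ssubset_iff_of_subset Finset.sdiff_subset]
          exact ⟨w, hw, fun hmem => (Finset.mem_sdiff.1 hmem).2 (self_mem_compOf hw)⟩
        omega
      obtain ⟨t, ht, hroot⟩ := ih (W \ compOf G W w) hcard s h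
      refine ⟨t, Finset.sdiff_subset ht, ?_⟩
      rwa [compOf_sdiff ht] at hroot

lemma main_strict (G : SimpleGraph V) : ∀ (n : ℕ) (S : Finset V), S.card ≤ n → ConnIn G S →
    S.Nonempty →
    (Polynomial.rootMultiplicity (topRoot (mu G S)) (mu G S) = 1) ∧
    (∀ u ∈ S, ∀ r ∈ (mu G (S.erase u)).roots, r < topRoot (mu G S)) := by
  intro n
  induction n with
  | zero =>
    intro S hS _ hne
    exfalso
    have := Finset.card_pos.2 hne
    omega
  | succ n ih =>
    intro S hS hconn hne
    have hd1 : 1 ≤ (mu G S).natDegree := by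
      rw [mu_natDegree]
      exact Finset.card_pos.2 hne
    have hroots_ne : (mu G S).roots ≠ 0 := roots_ne_zero_of_RRp (mu_RRp G S) hd1
    have htop_mem : topRoot (mu G S) ∈ (mu G S).roots := topRoot_mem hroots_ne
    have part2 : ∀ u ∈ S, ∀ r ∈ (mu G (S.erase u)).roots, r < topRoot (mu G S) := by
      intro u hu r hr
      set W := S.erase u with hWdef
      have hWcard : W.card ≤ n := by
        rw [hWdef, Finset.card_erase_of_mem hu]
        have := Finset.card_pos.2 hne
        omega
      have hWroots_ne : (mu G W).roots ≠ 0 := by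
        intro h0
        rw [h0] at hr
        simp at hr
      set s := topRoot (mu G W) with hs
      have hsmem : s ∈ (mu G W).roots := topRoot_mem hWroots_ne
      have hrles : r ≤ s := le_topRoot hr
      suffices hlt : s < topRoot (mu G S) from lt_of_le_of_lt hrles hlt
      obtain ⟨t₀, ht₀, hroot_t₀⟩ := exists_comp_root G W.card W le_rfl s hsmem
      set T := compOf G W t₀ with hT
      have hTsub : T ⊆ W := compOf_subset
      have hTne : T.Nonempty := ⟨t₀, self_mem_compOf ht₀⟩
      have hTconn : ConnIn G T := connIn_compOf
      have hTcard : T.card ≤ n := le_trans (Finset.card_le_card hTsub) hWcard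
      set R := W \ T with hR
      have hfacW : mu G W = mu G T * mu G R := mu_comp_split G W t₀
      have hWTR_ne : mu G T * mu G R ≠ 0 := by rw [← hfacW]; exact mu_ne_zero G W
      have hTroots_le : ∀ ρ ∈ (mu G T).roots, ρ ≤ s := by
        intro ρ hρ
        refine le_topRoot ?_
        rw [hfacW, Polynomial.roots_mul hWTR_ne, Multiset.mem_add]
        exact Or.inl hρ
      have hRroots_le : ∀ ρ ∈ (mu G R).roots, ρ ≤ s := by
        intro ρ hρ
        refine le_topRoot ?_
        rw [hfacW, Polynomial.roots_mul hWTR_ne, Multiset.mem_add]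
        exact Or.inr hρ
      have hTtop : topRoot (mu G T) = s := by
        refine le_antisymm (hTroots_le _ (topRoot_mem ?_)) (le_topRoot hroot_t₀)
        intro h0
        rw [h0] at hroot_t₀
        simp at hroot_t₀
      have hmultT : Polynomial.rootMultiplicity s (mu G T) = 1 := by
        have h1 := (ih T hTcard hTconn hTne).1
        rwa [hTtop] at h1
      set m := Polynomial.rootMultiplicity s (mu G W) with hm
      set m' := Polynomial.rootMultiplicity s (mu G R) with hm'
      have hmm' : m = 1 + m' := by
        rw [hm, hfacW, Polynomial.rootMultiplicity_mul hWTR_ne, hmultT]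
      have hmult_ge : ∀ v' ∈ W, m - 1 ≤ Polynomial.rootMultiplicity s (mu G (W.erase v')) := by
        intro v' hv'
        by_cases hvT : v' ∈ T
        · have hfac2 : mu G (W.erase v') = mu G (T.erase v') * mu G R := by
            have h2 := mu_split_erase G W t₀ v'
            rwa [Finset.erase_eq_of_notMem
              (fun hmem => (Finset.mem_sdiff.1 hmem).2 hvT)] at h2
          have h3 : mu G (T.erase v') * mu G R ≠ 0 := by
            rw [← hfac2]; exact mu_ne_zero G _
          rw [hfac2, Polynomial.rootMultiplicity_mul h3, ← hm']
          omega
        · have hvR : v' ∈ R := Finset.mem_sdiff.2 ⟨hv', hvT⟩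
          set Cc := compOf G R v' with hCc
          have hfacR : mu G R = mu G Cc * mu G (R \ Cc) := mu_comp_split G R v'
          have hRC_ne : mu G Cc * mu G (R \ Cc) ≠ 0 := by
            rw [← hfacR]; exact mu_ne_zero G R
          have hmultC_le : Polynomial.rootMultiplicity s (mu G Cc) ≤ 1 := by
            by_cases hsC : s ∈ (mu G Cc).roots
            · have hCroots_le : ∀ ρ ∈ (mu G Cc).roots, ρ ≤ s := by
                intro ρ hρ
                refine hRroots_le ρ ?_
                rw [hfacR, Polynomial.roots_mul hRC_ne, Multiset.mem_add]
                exact Or.inl hρ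
              have hCtop : topRoot (mu G Cc) = s := by
                refine le_antisymm (hCroots_le _ (topRoot_mem ?_)) (le_topRoot hsC)
                intro h0
                rw [h0] at hsC
                simp at hsC
              have hCcard : Cc.card ≤ n :=
                le_trans (Finset.card_le_card (compOf_subset.trans Finset.sdiff_subset)) hWcard
              have h4 := (ih Cc hCcard connIn_compOf ⟨v', self_mem_compOf hvR⟩).1
              rw [hCtop] at h4
              omega
            · have h5 : Polynomial.rootMultiplicity s (mu G Cc) = 0 := by
                rw [← Polynomial.count_roots]
                exact Multiset.count_eq_zero.2 hsC
              omega
          have hfac3 : mu G (W.erase v') = mu G T * mu G (R.erase v') := by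
            have h2 := mu_split_erase G W t₀ v'
            rwa [Finset.erase_eq_of_notMem (fun hmem => hvT hmem)] at h2
          have hfac4 : mu G (R.erase v') = mu G (Cc.erase v') * mu G (R \ Cc) := by
            have h2 := mu_split_erase G R v' v'
            rwa [Finset.erase_eq_of_notMem
              (fun hmem => (Finset.mem_sdiff.1 hmem).2 (self_mem_compOf hvR))] at h2
          have h6 : mu G T * mu G (R.erase v') ≠ 0 := by
            rw [← hfac3]; exact mu_ne_zero G _
          have h7 : mu G (Cc.erase v') * mu G (R \ Cc) ≠ 0 := by
            rw [← hfac4]; exact mu_ne_zero G _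
          have h8 : m' = Polynomial.rootMultiplicity s (mu G Cc) +
              Polynomial.rootMultiplicity s (mu G (R \ Cc)) := by
            rw [hm', hfacR, Polynomial.rootMultiplicity_mul hRC_ne]
          rw [hfac3, Polynomial.rootMultiplicity_mul h6, hmultT, hfac4,
            Polynomial.rootMultiplicity_mul h7]
          omega
      have hmonicpow : ∀ k : ℕ, ((X - C s)^k : ℝ[X]).Monic :=
        fun k => (Polynomial.monic_X_sub_C s).pow k
      set A := mu G W /ₘ (X - C s)^m with hA
      have hAfac : (X - C s)^m * A = mu G W :=
        Polynomial.pow_mul_divByMonic_rootMultiplicity_eq _ s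
      set Dv : V → ℝ[X] := fun v' => mu G (W.erase v') /ₘ (X - C s)^(m-1) with hDv
      have hDfac : ∀ v' ∈ nbr G S u, (X - C s)^(m-1) * Dv v' = mu G (W.erase v') := by
        intro v' hv'
        obtain ⟨hv'S, hv'u, -⟩ := mem_nbr.1 hv'
        have hv'W : v' ∈ W := Finset.mem_erase.2 ⟨hv'u, hv'S⟩
        have hdvd : (X - C s)^(m-1) ∣ mu G (W.erase v') :=
          dvd_trans (pow_dvd_pow _ (hmult_ge v' hv'W)) (Polynomial.pow_rootMultiplicity_dvd _ s)
        have hmod := Polynomial.modByMonic_add_div (mu G (W.erase v')) ((X - C s)^(m-1))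
        rwa [(Polynomial.modByMonic_eq_zero_iff_dvd (hmonicpow (m-1))).2 hdvd, zero_add] at hmod
      have hDnonneg : ∀ v' ∈ nbr G S u, 0 ≤ (Dv v').eval s := by
        intro v' hv'
        obtain ⟨hv'S, hv'u, -⟩ := mem_nbr.1 hv'
        have hv'W : v' ∈ W := Finset.mem_erase.2 ⟨hv'u, hv'S⟩
        have hfacD := hDfac v' hv'
        have hDne : Dv v' ≠ 0 := by
          intro h0
          rw [h0, mul_zero] at hfacD
          exact mu_ne_zero G _ hfacD.symm
        have hDmonic : (Dv v').Monic :=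
          (hmonicpow (m-1)).of_mul_monic_left (by rw [hfacD]; exact mu_monic G _)
        have hDRR : RRp (Dv v') :=
          ((RRp_mul_iff (pow_ne_zero _ (Polynomial.X_sub_C_ne_zero s)) hDne).1
            (by rw [hfacD]; exact mu_RRp G _)).2
        refine eval_nonneg_of_roots_le hDmonic hDRR fun ρ hρ => ?_
        have h1 : ρ ∈ (mu G (W.erase v')).roots := by
          rw [← hfacD, Polynomial.roots_mul (by rw [hfacD]; exact mu_ne_zero G _),
            Multiset.mem_add]
          exact Or.inr hρ
        exact roots_erase_le G W.card W le_rfl v' hv'W ρ h1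
      obtain ⟨v, hvT0, hadjuv⟩ := nbr_in_comp hconn hu ht₀
      have hvT : v ∈ T := hvT0
      have hvW : v ∈ W := hTsub hvT
      have hvnbr : v ∈ nbr G S u :=
        mem_nbr.2 ⟨Finset.mem_of_mem_erase hvW, Finset.ne_of_mem_erase hvW, hadjuv⟩
      have hDvpos : 0 < (Dv v).eval s := by
        set AR := mu G R /ₘ (X - C s)^m' with hAR
        have hARfac : (X - C s)^m' * AR = mu G R :=
          Polynomial.pow_mul_divByMonic_rootMultiplicity_eq _ s
        have hARpos : 0 < AR.eval s :=
          quot_eval_pos (mu_monic G R) (mu_RRp G R) hRroots_le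
        have hfac2 : mu G (W.erase v) = mu G (T.erase v) * mu G R := by
          have h2 := mu_split_erase G W t₀ v
          rwa [Finset.erase_eq_of_notMem
            (fun hmem => (Finset.mem_sdiff.1 hmem).2 hvT)] at h2
        have hid : (X - C s)^(m-1) * Dv v = (X - C s)^(m-1) * (mu G (T.erase v) * AR) := by
          rw [hDfac v hvnbr, hfac2, ← hARfac, show m - 1 = m' from by omega]
          ring
        have hcancel : Dv v = mu G (T.erase v) * AR :=
          mul_left_cancel₀ (pow_ne_zero _ (Polynomial.X_sub_C_ne_zero s)) hid
        rw [hcancel, Polynomial.eval_mul]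
        refine mul_pos ?_ hARpos
        refine eval_pos_of_roots_lt (mu_monic G _) (mu_RRp G _) fun ρ hρ => ?_
        have h9 := (ih T hTcard hTconn hTne).2 v hvT ρ hρ
        rwa [hTtop] at h9
      set η := X * ((X - C s) * A) - ∑ v' ∈ nbr G S u, Dv v' with hη
      have hηfac : (X - C s)^(m-1) * η = mu G S := by
        rw [mu_rec G hu, ← hWdef]
        rw [hη, mul_sub, Finset.mul_sum]
        refine congrArg₂ (· - ·) ?_ ?_
        · calc (X - C s)^(m-1) * (X * ((X - C s) * A))
              = X * ((X - C s)^(m-1) * (X - C s) * A) := by ring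
            _ = X * ((X - C s)^m * A) := by
                rw [← pow_succ, show m-1+1 = m from by omega]
            _ = X * mu G W := by rw [hAfac]
        · exact Finset.sum_congr rfl fun v' hv' => hDfac v' hv'
      have hηne : η ≠ 0 := by
        intro h0
        rw [h0, mul_zero] at hηfac
        exact mu_ne_zero G S hηfac.symm
      have hηmonic : η.Monic :=
        (hmonicpow (m-1)).of_mul_monic_left (by rw [hηfac]; exact mu_monic G S)
      have hηRR : RRp η :=
        ((RRp_mul_iff (pow_ne_zero _ (Polynomial.X_sub_C_ne_zero s)) hηne).1
          (by rw [hηfac]; exact mu_RRp G S)).2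
      have hηeval : η.eval s < 0 := by
        have h00 : Polynomial.eval s (X * ((X - C s) * A)) = 0 := by
          simp
        rw [hη, Polynomial.eval_sub, h00, Polynomial.eval_finset_sum]
        have hsum_pos : 0 < ∑ v' ∈ nbr G S u, (Dv v').eval s :=
          lt_of_lt_of_le hDvpos (Finset.single_le_sum hDnonneg hvnbr)
        linarith
      obtain ⟨ρ, hρmem, hρgt⟩ := exists_root_gt_of_eval_neg hηmonic hηRR hηeval
      have hρS : ρ ∈ (mu G S).roots := by
        rw [← hηfac, Polynomial.roots_mul (by rw [hηfac]; exact mu_ne_zero G S),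
          Multiset.mem_add]
        exact Or.inr hρmem
      exact lt_of_lt_of_le hρgt (le_topRoot hρS)
    refine ⟨?_, part2⟩
    have hder : 0 < (Polynomial.derivative (mu G S)).eval (topRoot (mu G S)) := by
      rw [mu_derivative, Polynomial.eval_finset_sum]
      refine Finset.sum_pos ?_ hne
      intro w hw
      exact eval_pos_of_roots_lt (mu_monic G _) (mu_RRp G _) (fun ρ hρ => part2 w hw ρ hρ)
    have hle := mult_le_one_of_derivative_ne_zero (ne_of_gt hder)
    have hge : 1 ≤ Polynomial.rootMultiplicity (topRoot (mu G S)) (mu G S) :=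
      (Polynomial.rootMultiplicity_pos (mu_ne_zero G S)).2
        (Polynomial.isRoot_of_mem_roots htop_mem)
    omega

lemma comp_neg_ne_zero {p : ℝ[X]} (hp : p ≠ 0) : p.comp (-X) ≠ 0 := by
  intro h0
  apply hp
  have h1 : (p.comp (-X)).comp (-X) = p := by
    rw [Polynomial.comp_assoc]
    simp only [Polynomial.neg_comp, Polynomial.X_comp, neg_neg, Polynomial.comp_X]
  rw [h0, Polynomial.zero_comp] at h1
  exact h1.symm

lemma rootMultiplicity_comp_neg (p : ℝ[X]) (hp : p ≠ 0) (r : ℝ) :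
    Polynomial.rootMultiplicity r (p.comp (-X)) = Polynomial.rootMultiplicity (-r) p := by
  set k := Polynomial.rootMultiplicity (-r) p with hk
  set q := p /ₘ (X - C (-r))^k with hq
  have hfac : (X - C (-r))^k * q = p :=
    Polynomial.pow_mul_divByMonic_rootMultiplicity_eq _ _
  have hqr : q.eval (-r) ≠ 0 :=
    Polynomial.eval_divByMonic_pow_rootMultiplicity_ne_zero _ hp
  have hqne : q ≠ 0 := by
    intro h0
    rw [h0, mul_zero] at hfac
    exact hp hfac.symm
  have hneg : ((-(X - C r) : ℝ[X]))^k = C ((-1:ℝ)^k) * (X - C r)^k := by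
    rw [neg_pow]
    congr 1
    rw [show ((-1:ℝ[X])) = C (-1:ℝ) from by simp, ← C_pow]
  have hcomp : p.comp (-X) = C ((-1:ℝ)^k) * ((X - C r)^k * q.comp (-X)) := by
    conv_lhs => rw [← hfac]
    rw [Polynomial.mul_comp, Polynomial.pow_comp, Polynomial.sub_comp, Polynomial.X_comp,
      Polynomial.C_comp]
    have h2 : (-X - C (-r) : ℝ[X]) = -(X - C r) := by
      rw [map_neg]
      ring
    rw [h2, hneg]
    ring
  have hqcne : q.comp (-X) ≠ 0 := comp_neg_ne_zero hqne
  have hCne : (C ((-1:ℝ)^k) : ℝ[X]) ≠ 0 := by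
    simp only [ne_eq, Polynomial.C_eq_zero]
    positivity
  have hne1 : (C ((-1:ℝ)^k) : ℝ[X]) * ((X - C r)^k * q.comp (-X)) ≠ 0 :=
    mul_ne_zero hCne (mul_ne_zero (pow_ne_zero _ (Polynomial.X_sub_C_ne_zero r)) hqcne)
  have hne2 : ((X - C r)^k : ℝ[X]) * q.comp (-X) ≠ 0 :=
    mul_ne_zero (pow_ne_zero _ (Polynomial.X_sub_C_ne_zero r)) hqcne
  rw [hcomp, Polynomial.rootMultiplicity_mul hne1, Polynomial.rootMultiplicity_mul hne2,
    Polynomial.rootMultiplicity_C, Polynomial.rootMultiplicity_X_sub_C_pow]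
  have h3 : Polynomial.rootMultiplicity r (q.comp (-X)) = 0 := by
    refine Polynomial.rootMultiplicity_eq_zero ?_
    rw [Polynomial.IsRoot, Polynomial.eval_comp]
    simpa using hqr
  omega

lemma mu_mult_symm (G : SimpleGraph V) (S : Finset V) (r : ℝ) :
    Polynomial.rootMultiplicity (-r) (mu G S) = Polynomial.rootMultiplicity r (mu G S) := by
  have h1 := rootMultiplicity_comp_neg (mu G S) (mu_ne_zero G S) r
  rw [mu_comp_neg] at h1
  have hCne : (C ((-1:ℝ)^S.card) : ℝ[X]) ≠ 0 := by
    simp only [ne_eq, Polynomial.C_eq_zero]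
    positivity
  rw [Polynomial.rootMultiplicity_mul (mul_ne_zero hCne (mu_ne_zero G S)),
    Polynomial.rootMultiplicity_C] at h1
  omega

set_option maxHeartbeats 2000000 in
lemma no_two_matching (G : SimpleGraph V) (hG : G.Connected)
    (h3 : (mu G Finset.univ).roots.toFinset.card = 3) (hn : 4 ≤ Fintype.card V) :
    mm G Finset.univ 2 = 0 := by
  classical
  have hNV : Nonempty V := by
    rw [← Fintype.card_pos_iff]
    omega
  have hune : (Finset.univ : Finset V).Nonempty := Finset.univ_nonempty
  set P := mu G Finset.univ with hP
  set n := Fintype.card V with hn'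
  have hcardu : (Finset.univ : Finset V).card = n := Finset.card_univ
  have hdeg : P.natDegree = n := by rw [hP, mu_natDegree, hcardu]
  have hRR : RRp P := mu_RRp G _
  have hmonic : P.Monic := mu_monic G _
  have hroots_ne : P.roots ≠ 0 := roots_ne_zero_of_RRp hRR (by omega)
  set F := P.roots.toFinset with hF
  set θ := topRoot P with hθ
  have hθroot : θ ∈ P.roots := topRoot_mem hroots_ne
  have hθF : θ ∈ F := Multiset.mem_toFinset.2 hθroot
  have hmax : ∀ x ∈ F, x ≤ θ := fun x hx => le_topRoot (Multiset.mem_toFinset.1 hx)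
  have hsymm : ∀ x : ℝ, x ∈ F → -x ∈ F := by
    intro x hx
    rw [Multiset.mem_toFinset, Polynomial.mem_roots'] at hx ⊢
    refine ⟨hx.1, ?_⟩
    have h1 := mu_mult_symm G Finset.univ x
    have h2 : 0 < Polynomial.rootMultiplicity x P :=
      (Polynomial.rootMultiplicity_pos (mu_ne_zero G _)).2 hx.2
    have h4 : 0 < Polynomial.rootMultiplicity (-x) P := by rw [hP, h1]; rw [hP] at h2; exact h2
    exact (Polynomial.rootMultiplicity_pos (mu_ne_zero G _)).1 h4
  have hθpos : 0 < θ := by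
    obtain ⟨x, hxF, hxθ⟩ := Finset.exists_mem_ne (by omega : 1 < F.card) θ
    by_contra hcon
    push_neg at hcon
    have h1 : x < θ := lt_of_le_of_ne (hmax x hxF) hxθ
    have h2 : -x ∈ F := hsymm x hxF
    have h3' : -x ≤ θ := hmax _ h2
    linarith
  have hmθF : -θ ∈ F := hsymm θ hθF
  have hθne : θ ≠ -θ := by intro h1; rw [← add_eq_zero_iff_eq_neg] at h1; linarith
  -- third element is 0
  have h0F : (0:ℝ) ∈ F := by
    have hc1 : ((F.erase θ).erase (-θ)).card = 1 := by
      rw [Finset.card_erase_of_mem (Finset.mem_erase.2 ⟨(Ne.symm hθne), hmθF⟩),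
        Finset.card_erase_of_mem hθF, h3]
    obtain ⟨z, hz⟩ := Finset.card_eq_one.1 hc1
    have hzmem : z ∈ (F.erase θ).erase (-θ) := by rw [hz]; exact Finset.mem_singleton_self z
    have hzF : z ∈ F := Finset.mem_of_mem_erase (Finset.mem_of_mem_erase hzmem)
    have hzθ : z ≠ θ := Finset.ne_of_mem_erase (Finset.mem_of_mem_erase hzmem)
    have hzmθ : z ≠ -θ := Finset.ne_of_mem_erase hzmem
    have hmz : -z ∈ (F.erase θ).erase (-θ) := by
      refine Finset.mem_erase.2 ⟨?_, Finset.mem_erase.2 ⟨?_, hsymm z hzF⟩⟩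
      · intro h1
        exact hzθ (neg_injective h1)
      · intro h1
        exact hzmθ (by linarith)
    rw [hz, Finset.mem_singleton] at hmz
    have hz0 : z = 0 := by linarith
    rwa [hz0] at hzF
  have hPne : P ≠ 0 := by rw [hP]; exact mu_ne_zero G _
  -- F = {-θ, 0, θ}
  have hcard3 : ({-θ, 0, θ} : Finset ℝ).card = 3 := by
    rw [Finset.card_insert_of_notMem, Finset.card_insert_of_notMem, Finset.card_singleton]
    · simp only [Finset.mem_singleton]
      intro h1
      linarith
    · simp only [Finset.mem_insert, Finset.mem_singleton]
      push_neg
      constructor <;> intro h1 <;> linarith [h1]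
  have hFset : F = {-θ, 0, θ} := by
    have hsub : ({-θ, 0, θ} : Finset ℝ) ⊆ F := by
      intro x hx
      simp only [Finset.mem_insert, Finset.mem_singleton] at hx
      rcases hx with rfl | rfl | rfl
      · exact hmθF
      · exact h0F
      · exact hθF
    exact (Finset.eq_of_subset_of_card_le hsub (by rw [h3, hcard3])).symm
  -- multiplicities
  have hconn := connIn_univ hG
  have hmultθ : Polynomial.rootMultiplicity θ P = 1 := by
    have h1 := (main_strict G n Finset.univ (le_of_eq hcardu) hconn hune).1
    rw [← hP] at h1
    rwa [← hθ] at h1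
  have hmultmθ : Polynomial.rootMultiplicity (-θ) P = 1 := by
    rw [hP, mu_mult_symm, ← hP]
    exact hmultθ
  have hcard_roots : Multiset.card P.roots = n := by
    have h1 : RRp P := hRR
    rw [RRp] at h1
    rw [h1, hdeg]
  have hsum := Multiset.toFinset_sum_count_eq P.roots
  rw [show P.roots.toFinset = F from rfl, hFset] at hsum
  rw [Finset.sum_insert (by
      simp only [Finset.mem_insert, Finset.mem_singleton]
      push_neg
      constructor <;> intro h1 <;> linarith [h1]),
    Finset.sum_insert (by
      simp only [Finset.mem_singleton]
      intro h1
      linarith),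
    Finset.sum_singleton] at hsum
  simp only [Polynomial.count_roots] at hsum
  have hmult0 : Polynomial.rootMultiplicity 0 P = n - 2 := by
    rw [hcard_roots] at hsum
    omega
  have hnotroot : ∀ x : ℝ, x ≠ 0 → x ≠ θ → x ≠ -θ → Polynomial.rootMultiplicity x P = 0 := by
    intro x h1 h2 h3'
    refine Polynomial.rootMultiplicity_eq_zero fun hroot => ?_
    have hxF : x ∈ F := Multiset.mem_toFinset.2 (Polynomial.mem_roots'.2 ⟨hPne, hroot⟩)
    rw [hFset] at hxF
    simp only [Finset.mem_insert, Finset.mem_singleton] at hxF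
    tauto
  set M : Multiset ℝ := Multiset.replicate (n-2) 0 + {θ, -θ} with hM
  have hrootsM : P.roots = M := by
    refine Multiset.ext.2 fun x => ?_
    rw [Polynomial.count_roots, hM, Multiset.count_add, Multiset.count_replicate]
    have hcount2 : Multiset.count x ({θ, -θ} : Multiset ℝ) =
        (if x = θ then 1 else 0) + (if x = -θ then 1 else 0) := by
      rw [Multiset.insert_eq_cons, Multiset.count_cons, Multiset.count_singleton]
      omega
    rw [hcount2]
    by_cases hx0 : x = 0
    · subst hx0
      rw [if_pos rfl, if_neg (by intro h1; linarith), if_neg (by intro h1; linarith), hmult0]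
      omega
    · rw [if_neg (fun h1 => hx0 h1.symm)]
      by_cases hxθ : x = θ
      · subst hxθ
        rw [if_pos rfl, if_neg (by intro h1; linarith), hmultθ]
      · rw [if_neg hxθ]
        by_cases hxmθ : x = -θ
        · subst hxmθ
          rw [if_pos rfl, hmultmθ]
        · rw [if_neg hxmθ, hnotroot x hx0 hxθ hxmθ]
  have hprod : P = X^(n-2) * (X*X - C (θ^2)) := by
    have h1 := (RRp_splits hRR).eq_prod_roots_of_monic hmonic
    rw [hrootsM, hM] at h1
    rw [h1, Multiset.map_add, Multiset.prod_add, Multiset.map_replicate,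
      Multiset.prod_replicate]
    have h2 : ((Multiset.map (fun a => X - C a) ({θ, -θ} : Multiset ℝ))).prod
        = (X - C θ) * (X - C (-θ)) := by
      rw [Multiset.insert_eq_cons, Multiset.map_cons, Multiset.map_singleton,
        Multiset.prod_cons, Multiset.prod_singleton]
    rw [h2, show (X - C (0:ℝ)) = X from by simp]
    congr 1
    rw [map_neg, show (C (θ^2) : ℝ[X]) = C θ * C θ from by rw [← C_mul, sq]]
    ring
  clear_value θ n P
  have hcoeff : P.coeff (n - 4) = 0 := by
    have e1 : (X:ℝ[X])^(n-2) * (X*X - C (θ^2)) = X^n - C (θ^2) * X^(n-2) := by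
      have e2 : (X:ℝ[X])^(n-2) * (X*X) = X^n := by
        rw [show ((X:ℝ[X])*X) = X^2 from (sq X).symm, ← pow_add,
          show n-2+2 = n from by omega]
      rw [mul_sub, e2]
      ring
    rw [hprod, e1, Polynomial.coeff_sub, Polynomial.coeff_X_pow, Polynomial.coeff_C_mul,
      Polynomial.coeff_X_pow, if_neg (by omega), if_neg (by omega), mul_zero, sub_zero]
  have hco := mu_coeff (G := G) (S := Finset.univ) (j := 2)
    (by rw [hcardu]; omega)
  rw [hcardu, ← hP] at hco
  have he4 : n - 2*2 = n - 4 := by omega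
  rw [he4, hcoeff] at hco
  have hfin : ((mm G Finset.univ 2 : ℕ) : ℝ) = 0 := by
    have h9 : (0:ℝ) = (-1:ℝ)^2 * (mm G Finset.univ 2 : ℝ) := hco
    norm_num at h9
    linarith [h9]
  exact_mod_cast hfin

lemma sym2_eq_of_mem {x y : V} {e : Sym2 V} (hxy : x ≠ y) (hx : x ∈ e) (hy : y ∈ e) :
    e = s(x,y) := by
  induction e using Sym2.inductionOn with
  | _ a b =>
    rcases Sym2.mem_iff.1 hx with rfl | rfl
    · rcases Sym2.mem_iff.1 hy with rfl | rfl
      · exact absurd rfl hxy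
      · rfl
    · rcases Sym2.mem_iff.1 hy with rfl | rfl
      · exact Sym2.eq_swap
      · exact absurd rfl hxy

lemma edges_intersect (G : SimpleGraph V) (h : mm G Finset.univ 2 = 0) :
    ∀ e ∈ G.edgeSet, ∀ f ∈ G.edgeSet, e ≠ f → ∃ x, x ∈ e ∧ x ∈ f := by
  classical
  intro e he f hf hef
  by_contra hcon
  push_neg at hcon
  have hmem : ({e, f} : Finset (Sym2 V)) ∈ mf G Finset.univ 2 := by
    refine mem_mf.2 ⟨?_, ?_, ?_, ?_⟩
    · rw [Finset.card_insert_of_notMem (by simpa using hef), Finset.card_singleton]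
    · intro g hg
      rcases Finset.mem_insert.1 (by exact_mod_cast hg) with rfl | hg'
      · exact he
      · rw [Finset.mem_singleton.1 hg']
        exact hf
    · intro g hg v hv
      exact Finset.mem_univ v
    · rw [Finset.coe_insert, Finset.coe_singleton]
      exact (haveI : Std.Symm (fun (e f : Sym2 V) => ∀ v ∈ e, v ∉ f) := ⟨fun _ _ h => symm_rel h⟩; Set.pairwise_insert_of_symm).2
        ⟨Set.pairwise_singleton _ _, fun b hb _ => by
          rw [Set.mem_singleton_iff] at hb
          subst hb
          exact fun v hv hvf => hcon v hv hvf⟩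
  rw [mm, Finset.card_eq_zero] at h
  rw [h] at hmem
  exact Finset.notMem_empty _ hmem

lemma exists_adj (G : SimpleGraph V) (hG : G.Connected) (h2 : 2 ≤ Fintype.card V) (v : V) :
    ∃ w, G.Adj v w := by
  obtain ⟨u, hu⟩ := Fintype.exists_ne_of_one_lt_card (by omega) v
  obtain ⟨p⟩ := hG.preconnected v u
  cases p with
  | nil => exact absurd rfl hu
  | cons h q => exact ⟨_, h⟩

end MatchProof

section
open MatchProof

/-- A connected graph whose matching polynomial has exactly three distinct (real) roots is a star
`K_{1,m}` with `m ≥ 2`, or the triangle `K₃`. -/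
theorem star_or_K3_of_three_distinct_matching_roots {V : Type*} [Fintype V]
    (G : SimpleGraph V) (hG : G.Connected)
    (h : G.matchingPolynomial.roots.toFinset.card = 3) :
    (∃ m : ℕ, 2 ≤ m ∧ Nonempty (G ≃g starGraph m)) ∨
      Nonempty (G ≃g (⊤ : SimpleGraph (Fin 3))) := by
  classical
  letI : DecidableEq V := Classical.decEq V
  have hmeq : G.matchingPolynomial = mu G Finset.univ := matchingPolynomial_eq G
  have hn3 : 3 ≤ Fintype.card V := by
    have h1 : (G.matchingPolynomial).roots.toFinset.card ≤
        Multiset.card (G.matchingPolynomial).roots := Multiset.toFinset_card_le _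
    have h2 := Polynomial.card_roots' (G.matchingPolynomial)
    have h3' : (G.matchingPolynomial).natDegree = Fintype.card V := by
      rw [hmeq, mu_natDegree, Finset.card_univ]
    omega
  have hm2 : mm G Finset.univ 2 = 0 := by
    rcases lt_or_ge (Fintype.card V) 4 with h4 | h4
    · exact mm_eq_zero (by rw [Finset.card_univ]; omega)
    · exact no_two_matching G hG (by rw [← hmeq]; exact h) h4
  have hint := edges_intersect G hm2
  have h2le : 2 ≤ Fintype.card V := by omega
  by_cases hstar : ∃ c : V, ∀ e ∈ G.edgeSet, c ∈ e
  · left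
    obtain ⟨c, hc⟩ := hstar
    have hadj_c : ∀ v : V, v ≠ c → G.Adj c v := by
      intro v hv
      obtain ⟨w, hw⟩ := exists_adj G hG h2le v
      have hmem : c ∈ s(v, w) := hc _ ((G.mem_edgeSet).2 hw)
      rcases Sym2.mem_iff.1 hmem with h' | h'
      · exact absurd h'.symm hv
      · rw [← h'] at hw
        exact hw.symm
    have hadj_iff : ∀ v w : V, G.Adj v w ↔ (v ≠ w ∧ (v = c ∨ w = c)) := by
      intro v w
      constructor
      · intro h'
        refine ⟨h'.ne, ?_⟩
        have hmem := hc _ ((G.mem_edgeSet).2 h')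
        rcases Sym2.mem_iff.1 hmem with h'' | h''
        · exact Or.inl h''.symm
        · exact Or.inr h''.symm
      · rintro ⟨hne, rfl | rfl⟩
        · exact hadj_c w (Ne.symm hne)
        · exact (hadj_c v hne).symm
    set m := Fintype.card V - 1 with hm
    have hcard_sub : Fintype.card {b : V // b ≠ c} = m := by
      have h1 := Fintype.card_congr (Equiv.optionSubtypeNe c)
      rw [Fintype.card_option] at h1
      omega
    have e₁ : {b : V // b ≠ c} ≃ Fin m := Fintype.equivFinOfCardEq hcard_sub
    set φ : V ≃ Option (Fin m) := ((Equiv.optionSubtypeNe c).symm).trans (Equiv.optionCongr e₁)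
      with hφ
    have hφnone : ∀ v, φ v = none ↔ v = c := by
      intro v
      constructor
      · intro h'
        by_contra hvc
        rw [hφ] at h'
        simp [Equiv.optionSubtypeNe_symm_of_ne hvc] at h'
      · rintro rfl
        rw [hφ]
        simp [Equiv.optionSubtypeNe_symm_self]
    refine ⟨m, by omega, ⟨⟨φ, ?_⟩⟩⟩
    intro a b
    rw [starGraph, SimpleGraph.fromRel_adj, hadj_iff]
    constructor
    · rintro ⟨hne, hor⟩
      refine ⟨fun heq => hne (by rw [heq]), ?_⟩
      rcases hor with h' | h'
      · exact Or.inl ((hφnone a).1 h')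
      · exact Or.inr ((hφnone b).1 h')
    · rintro ⟨hne, hor⟩
      refine ⟨fun heq => hne (φ.injective heq), ?_⟩
      rcases hor with h' | h'
      · exact Or.inl ((hφnone a).2 h')
      · exact Or.inr ((hφnone b).2 h')
  · right
    push_neg at hstar
    obtain ⟨a0⟩ : Nonempty V := Fintype.card_pos_iff.1 (by omega)
    obtain ⟨b0, hab⟩ := exists_adj G hG h2le a0
    have hane : a0 ≠ b0 := hab.ne
    have he₁ : s(a0, b0) ∈ G.edgeSet := (G.mem_edgeSet).2 hab
    obtain ⟨e₂, he₂, ha_not⟩ := hstar a0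
    have hne12 : s(a0, b0) ≠ e₂ := fun h' => ha_not (h' ▸ (by simp : a0 ∈ s(a0,b0)))
    obtain ⟨x, hx1, hx2⟩ := hint _ he₁ e₂ he₂ hne12
    have hxb : x = b0 := by
      rcases Sym2.mem_iff.1 hx1 with rfl | rfl
      · exact absurd hx2 ha_not
      · rfl
    rw [hxb] at hx2
    -- hx2 : b0 ∈ e₂
    have hnd2 : ¬ e₂.IsDiag := G.not_isDiag_of_mem_edgeSet he₂
    set c0 := Sym2.Mem.other hx2 with hc0
    have hspec2 : s(b0, c0) = e₂ := Sym2.other_spec hx2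
    have hbc : G.Adj b0 c0 := by
      rw [← SimpleGraph.mem_edgeSet, hspec2]
      exact he₂
    have hcb : c0 ≠ b0 := Sym2.other_ne hnd2 hx2
    have hca : c0 ≠ a0 := by
      intro h'
      apply ha_not
      rw [← hspec2, ← h']
      simp
    obtain ⟨e₃, he₃, hb_not⟩ := hstar b0
    have hne13 : s(a0, b0) ≠ e₃ := fun h' => hb_not (h' ▸ (by simp : b0 ∈ s(a0,b0)))
    have hne23 : e₂ ≠ e₃ := fun h' => hb_not (h' ▸ (by rw [← hspec2]; simp : b0 ∈ e₂))
    obtain ⟨y, hy1, hy3⟩ := hint _ he₁ e₃ he₃ hne13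
    have hya : y = a0 := by
      rcases Sym2.mem_iff.1 hy1 with rfl | rfl
      · rfl
      · exact absurd hy3 hb_not
    rw [hya] at hy3
    -- hy3 : a0 ∈ e₃
    obtain ⟨z, hz2, hz3⟩ := hint e₂ he₂ e₃ he₃ hne23
    have hzc : z = c0 := by
      rw [← hspec2] at hz2
      rcases Sym2.mem_iff.1 hz2 with rfl | rfl
      · exact absurd hz3 hb_not
      · rfl
    rw [hzc] at hz3
    -- hz3 : c0 ∈ e₃
    have he₃eq : e₃ = s(a0, c0) := sym2_eq_of_mem (Ne.symm hca) hy3 hz3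
    have hac : G.Adj a0 c0 := by
      rw [← SimpleGraph.mem_edgeSet, ← he₃eq]
      exact he₃
    have hall : ∀ d : V, d = a0 ∨ d = b0 ∨ d = c0 := by
      intro d
      by_contra hcon
      push_neg at hcon
      obtain ⟨hda, hdb, hdc⟩ := hcon
      obtain ⟨w, hw⟩ := exists_adj G hG h2le d
      have hf : s(d, w) ∈ G.edgeSet := (G.mem_edgeSet).2 hw
      have hd1 : d ∉ s(a0, b0) := by simp [hda, hdb]
      have hd2 : d ∉ e₂ := by
        rw [← hspec2]
        simp [hdb, hdc]
      have hd3 : d ∉ e₃ := by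
        rw [he₃eq]
        simp [hda, hdc]
      have hw1 : w ∈ s(a0, b0) := by
        obtain ⟨x', hx'1, hx'2⟩ := hint _ hf _ he₁
          (fun h' => hd1 (h' ▸ (by simp : d ∈ s(d,w))))
        rcases Sym2.mem_iff.1 hx'1 with rfl | rfl
        · exact absurd hx'2 hd1
        · exact hx'2
      have hw2 : w ∈ e₂ := by
        obtain ⟨x', hx'1, hx'2⟩ := hint _ hf _ he₂
          (fun h' => hd2 (h' ▸ (by simp : d ∈ s(d,w))))
        rcases Sym2.mem_iff.1 hx'1 with rfl | rfl
        · exact absurd hx'2 hd2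
        · exact hx'2
      have hw3 : w ∈ e₃ := by
        obtain ⟨x', hx'1, hx'2⟩ := hint _ hf _ he₃
          (fun h' => hd3 (h' ▸ (by simp : d ∈ s(d,w))))
        rcases Sym2.mem_iff.1 hx'1 with rfl | rfl
        · exact absurd hx'2 hd3
        · exact hx'2
      have hwb : w = b0 := by
        rw [← hspec2] at hw2
        rcases Sym2.mem_iff.1 hw2 with h2 | h2
        · exact h2
        · rcases Sym2.mem_iff.1 hw1 with h1 | h1
          · exact absurd (h2.symm.trans h1) hca
          · exact absurd (h2.symm.trans h1) hcb
      rw [hwb] at hw3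
      exact hb_not hw3
    have hcard3 : Fintype.card V = 3 := by
      have huniv : (Finset.univ : Finset V) = {a0, b0, c0} := by
        ext d
        simp only [Finset.mem_univ, true_iff, Finset.mem_insert, Finset.mem_singleton]
        exact hall d
      rw [← Finset.card_univ, huniv,
        Finset.card_insert_of_notMem (by simp [hane, (Ne.symm hca : a0 ≠ c0)]),
        Finset.card_insert_of_notMem (by simp [(Ne.symm hcb : b0 ≠ c0)]),
        Finset.card_singleton]
    have hadj_all : ∀ v w : V, v ≠ w → G.Adj v w := by
      intro v w hvw
      rcases hall v with rfl | rfl | rfl <;> rcases hall w with rfl | rfl | rfl <;>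
        first
          | exact absurd rfl hvw
          | exact hab
          | exact hab.symm
          | exact hbc
          | exact hbc.symm
          | exact hac
          | exact hac.symm
    have ψ : V ≃ Fin 3 := Fintype.equivFinOfCardEq hcard3
    refine ⟨⟨ψ, ?_⟩⟩
    intro v w
    rw [SimpleGraph.top_adj]
    constructor
    · intro h'
      exact hadj_all v w (fun heq => h' (by rw [heq]))
    · intro h'
      exact fun heq => h'.ne (ψ.injective heq)

end
end
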